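/- arXiv:2604.21583 — 2 statements merged into one kernel-verified Lean document; each statement's English description precedes it below -/
import Mathlib

section
/- Let 3/2 < β ≤ 2. Then there exists a constant C > 0 such that for every d ∈ ℤ², ∑_{r ∈ ℤ²} (1+|r|²)^{−β/2} (1+|r+d|²)^{−β/2} ≤ C · (1+log(2+|d|)) · (1+|d|²)^{−(β−1)}. -/
open scoped ENNReal

/-- Squared Euclidean norm on `ℤ²`. -/
noncomputable def nsq (p : ℤ × ℤ) : ℝ := (p.1 : ℝ) ^ 2 + (p.2 : ℝ) ^ 2

namespace BesselAux

open Real Finset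

/-- Bernoulli-type telescoping step. -/
lemma bern_step {q x : ℝ} (hq : 0 < q) (hx : 1 ≤ x) :
    q * (x + 1) ^ (-(q + 1)) ≤ x ^ (-q) - (x + 1) ^ (-q) := by
  have hx0 : (0:ℝ) < x := lt_of_lt_of_le one_pos hx
  have hx1 : (0:ℝ) < x + 1 := by linarith
  set t : ℝ := (x + 1) / x with ht
  have ht1 : 1 < t := by
    rw [ht, lt_div_iff₀ hx0]; linarith
  have ht0 : 0 < t := by linarith
  have hlog : 1 / (x + 1) ≤ Real.log t := by
    have h1 : Real.log t⁻¹ ≤ t⁻¹ - 1 := Real.log_le_sub_one_of_pos (by positivity)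
    rw [Real.log_inv] at h1
    have h2 : t⁻¹ = x / (x + 1) := by rw [ht]; field_simp
    have h3 : 1 - t⁻¹ ≤ Real.log t := by linarith
    rw [h2] at h3
    calc 1 / (x+1) = 1 - x / (x+1) := by field_simp; ring
    _ ≤ Real.log t := h3
  have hkey : 1 + q / (x + 1) ≤ t ^ q := by
    rw [Real.rpow_def_of_pos ht0]
    calc 1 + q / (x+1) = q * (1/(x+1)) + 1 := by ring
    _ ≤ Real.log t * q + 1 := by nlinarith
    _ ≤ Real.exp (Real.log t * q) := Real.add_one_le_exp _
  have hB : (0:ℝ) < (x + 1) ^ (-q) := Real.rpow_pos_of_pos hx1 _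
  have hA : x ^ (-q) = t ^ q * (x + 1) ^ (-q) := by
    have h1 : (0:ℝ) < x ^ q := Real.rpow_pos_of_pos hx0 q
    have h2 : (0:ℝ) < (x+1) ^ q := Real.rpow_pos_of_pos hx1 q
    rw [ht, Real.div_rpow (by linarith) hx0.le, Real.rpow_neg hx1.le, Real.rpow_neg hx0.le]
    field_simp
  have hsplit : (x + 1) ^ (-(q + 1)) = (x + 1) ^ (-q) * (x + 1)⁻¹ := by
    rw [show -(q+1) = -q + (-1) by ring, Real.rpow_add hx1, Real.rpow_neg_one]
  rw [hA, hsplit]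
  have h4 : q * (x+1)⁻¹ ≤ t ^ q - 1 := by
    have h5 : q / (x+1) ≤ t ^ q - 1 := by linarith
    rw [div_eq_mul_inv] at h5; linarith
  nlinarith [mul_le_mul_of_nonneg_right h4 hB.le]

/-- Partial-sum tail bound. -/
lemma partial_tail_bound {p : ℝ} (hp : 1 < p) {N : ℕ} (hN : 1 ≤ N) (m : ℕ) :
    ∑ k ∈ Finset.range m, ((N + k : ℕ) : ℝ) ^ (-p) ≤ (1 + 1 / (p - 1)) * (N : ℝ) ^ (1 - p) := by
  have hN1 : (1:ℝ) ≤ (N:ℝ) := by exact_mod_cast hN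
  have hq : 0 < p - 1 := by linarith
  set g : ℕ → ℝ := fun i => ((N + i : ℕ) : ℝ) ^ (-(p - 1)) with hg
  have hfirst : ((N + 0 : ℕ):ℝ) ^ (-p) ≤ (N : ℝ) ^ (1 - p) := by
    rw [Nat.add_zero]
    exact Real.rpow_le_rpow_of_exponent_le hN1 (by linarith)
  have hg0 : g 0 = (N:ℝ) ^ (1 - p) := by
    rw [hg]; simp only [Nat.add_zero]
    rw [show -(p-1) = 1-p by ring]
  rcases m with _ | m'
  · simp; positivity
  rw [Finset.sum_range_succ' (fun k => ((N + k : ℕ) : ℝ) ^ (-p)) m']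
  have key : ∀ i : ℕ, ((N + (i+1) : ℕ) : ℝ) ^ (-p) ≤ (p-1)⁻¹ * (g i - g (i+1)) := by
    intro i
    have hx : (1:ℝ) ≤ ((N + i : ℕ) : ℝ) := by
      have h6 : (1:ℕ) ≤ N + i := le_trans hN (Nat.le_add_right _ _)
      exact_mod_cast h6
    have hb := bern_step hq hx
    rw [show p - 1 + 1 = p from by ring] at hb
    have hcast : ((N + (i+1) : ℕ) : ℝ) = ((N + i : ℕ) : ℝ) + 1 := by push_cast; ring
    have hgi1 : g (i+1) = (((N + i : ℕ) : ℝ) + 1) ^ (-(p-1)) := by rw [hg, ← hcast]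
    rw [hcast, hgi1, hg, inv_mul_eq_div, le_div_iff₀ hq, mul_comm]
    exact hb
  calc ∑ k ∈ Finset.range m', ((N + (k+1) : ℕ) : ℝ) ^ (-p) + ((N + 0 : ℕ):ℝ) ^ (-p)
      ≤ ∑ k ∈ Finset.range m', (p-1)⁻¹ * (g k - g (k+1)) + (N:ℝ) ^ (1-p) := by
        exact add_le_add (Finset.sum_le_sum fun i _ => key i) hfirst
    _ = (p-1)⁻¹ * (g 0 - g m') + (N:ℝ) ^ (1-p) := by
        rw [← Finset.mul_sum, Finset.sum_range_sub' g m']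
    _ ≤ (p-1)⁻¹ * g 0 + (N:ℝ) ^ (1-p) := by
        have h7 : (0:ℝ) ≤ g m' := Real.rpow_nonneg (by positivity) _
        have h8 := mul_le_mul_of_nonneg_left (by linarith : g 0 - g m' ≤ g 0) (inv_nonneg.mpr hq.le)
        linarith
    _ = (1 + 1/(p-1)) * (N:ℝ) ^ (1-p) := by rw [hg0]; field_simp; ring


/-- tsum tail bound in ENNReal. -/
lemma tsum_tail_bound {p : ℝ} (hp : 1 < p) {N : ℕ} (hN : 1 ≤ N) :
    ∑' k : ℕ, ENNReal.ofReal (((N + k : ℕ) : ℝ) ^ (-p)) ≤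
      ENNReal.ofReal ((1 + 1 / (p - 1)) * (N : ℝ) ^ (1 - p)) := by
  rw [ENNReal.tsum_eq_iSup_sum]
  apply iSup_le
  intro s
  obtain ⟨m, hm⟩ := Finset.exists_nat_subset_range s
  calc ∑ k ∈ s, ENNReal.ofReal (((N + k : ℕ) : ℝ) ^ (-p))
      ≤ ∑ k ∈ Finset.range m, ENNReal.ofReal (((N + k : ℕ) : ℝ) ^ (-p)) :=
        Finset.sum_le_sum_of_subset hm
    _ = ENNReal.ofReal (∑ k ∈ Finset.range m, ((N + k : ℕ) : ℝ) ^ (-p)) := by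
        rw [ENNReal.ofReal_sum_of_nonneg]
        intro i _; positivity
    _ ≤ _ := ENNReal.ofReal_le_ofReal (partial_tail_bound hp hN m)

/-- Splitting an ENNReal nat tsum at N. -/
lemma tsum_split (f : ℕ → ℝ≥0∞) (N : ℕ) :
    ∑' n, f n ≤ ∑ n ∈ Finset.range N, f n + ∑' k : ℕ, f (N + k) := by
  rw [← Summable.tsum_add_tsum_compl (s := (↑(Finset.range N) : Set ℕ)) ENNReal.summable ENNReal.summable]
  gcongr
  · rw [Finset.tsum_subtype']
  · have hinj : Function.Injective
        (fun x : ((↑(Finset.range N) : Set ℕ)ᶜ : Set ℕ) => x.1 - N) := by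
      rintro ⟨a, ha⟩ ⟨b, hb⟩ h
      simp only [Set.mem_compl_iff, Finset.coe_range, Set.mem_Iio, not_lt] at ha hb
      replace h : a - N = b - N := h
      exact Subtype.ext (show a = b by omega)
    calc ∑' (x : ((↑(Finset.range N) : Set ℕ)ᶜ : Set ℕ)), f ↑x
        = ∑' (x : ((↑(Finset.range N) : Set ℕ)ᶜ : Set ℕ)), (fun k => f (N + k)) (x.1 - N) := by
          apply tsum_congr
          rintro ⟨a, ha⟩
          simp only [Set.mem_compl_iff, Finset.coe_range, Set.mem_Iio, not_lt] at ha
          simp only []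
          congr 1
          omega
      _ ≤ ∑' k : ℕ, f (N + k) := ENNReal.tsum_comp_le_tsum_of_injective hinj _


/-- Reduce an even `ℤ`-sum to a `ℕ`-sum. -/
lemma tsum_int_le (f : ℕ → ℝ≥0∞) :
    ∑' y : ℤ, f y.natAbs ≤ 2 * ∑' n : ℕ, f n := by
  rw [tsum_of_nat_of_neg_add_one (f := fun y : ℤ => f y.natAbs)
      ENNReal.summable ENNReal.summable, two_mul]
  refine add_le_add (le_of_eq (tsum_congr fun n => by simp)) ?_
  have h1 : ∀ n : ℕ, ((-(n + 1) : ℤ)).natAbs = n + 1 := by intro n; simp; omega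
  calc ∑' n : ℕ, f ((-((n:ℤ)+1) : ℤ)).natAbs = ∑' n : ℕ, f (n+1) := by
        apply tsum_congr; intro n; rw [h1]
    _ ≤ ∑' n : ℕ, f n :=
        ENNReal.tsum_comp_le_tsum_of_injective (add_left_injective 1) f

/-- Harmonic sum bound. -/
lemma harmonic_sum_bound (m : ℕ) :
    ∑ n ∈ Finset.range m, ((n : ℝ) + 1)⁻¹ ≤ 1 + Real.log m := by
  have h := harmonic_le_one_add_log m
  have he : ((harmonic m : ℚ) : ℝ) = ∑ n ∈ Finset.range m, ((n : ℝ) + 1)⁻¹ := by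
    rw [harmonic]
    push_cast
    rfl
  linarith [he ▸ h]


/-- 1D lattice sum bound: `∑_{y ∈ ℤ} (c² + y²)^{-s} ≤ 10 c^{1-2s}` for `c ≥ 1`, `s ≥ 3/4`. -/
lemma sum_line {s c : ℝ} (hs : 3/4 ≤ s) (hc : 1 ≤ c) :
    ∑' y : ℤ, ENNReal.ofReal ((c^2 + (y:ℝ)^2) ^ (-s)) ≤ ENNReal.ofReal (10 * c ^ (1 - 2*s)) := by
  have hc0 : (0:ℝ) < c := lt_of_lt_of_le one_pos hc
  have hp : 1 < 2*s := by linarith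
  set F : ℕ → ℝ≥0∞ := fun n => ENNReal.ofReal ((c^2 + (n:ℝ)^2) ^ (-s)) with hF
  have heven : ∀ y : ℤ, ENNReal.ofReal ((c^2 + (y:ℝ)^2) ^ (-s)) = F y.natAbs := by
    intro y
    rw [hF]
    congr 2
    rw [Nat.cast_natAbs, Int.cast_abs, sq_abs]
  set N : ℕ := ⌊c⌋₊ + 1 with hNdef
  have hN1 : 1 ≤ N := Nat.le_add_left _ _
  have hcN : c < N := by
    rw [hNdef]; push_cast; exact Nat.lt_floor_add_one c
  have hNle : (N:ℝ) ≤ 2*c := by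
    rw [hNdef]; push_cast
    have := Nat.floor_le hc0.le (R := ℝ)
    linarith
  -- head bound
  have hhead : ∑ n ∈ Finset.range N, F n ≤ ENNReal.ofReal (2 * c ^ (1 - 2*s)) := by
    have hterm : ∀ n ∈ Finset.range N, F n ≤ ENNReal.ofReal (c ^ (-(2*s))) := by
      intro n _
      apply ENNReal.ofReal_le_ofReal
      have h1 : (c^2) ^ (-s) = c ^ (-(2*s)) := by
        rw [← Real.rpow_natCast c 2, ← Real.rpow_mul hc0.le]
        norm_num
      rw [← h1]
      apply Real.rpow_le_rpow_of_nonpos (by positivity) (by nlinarith [sq_nonneg ((n:ℝ))])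
        (by linarith)
    calc ∑ n ∈ Finset.range N, F n ≤ ∑ _n ∈ Finset.range N, ENNReal.ofReal (c ^ (-(2*s))) :=
          Finset.sum_le_sum hterm
      _ = N * ENNReal.ofReal (c ^ (-(2*s))) := by
          rw [Finset.sum_const, Finset.card_range]; rw [nsmul_eq_mul]
      _ = ENNReal.ofReal (N * c ^ (-(2*s))) := by
          rw [ENNReal.ofReal_mul (by positivity)]
          congr 1
          rw [ENNReal.ofReal_natCast]
      _ ≤ ENNReal.ofReal (2 * c ^ (1 - 2*s)) := by
          apply ENNReal.ofReal_le_ofReal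
          have : c ^ (1 - 2*s) = c * c ^ (-(2*s)) := by
            rw [show 1 - 2*s = 1 + -(2*s) by ring, Real.rpow_add hc0, Real.rpow_one]
          rw [this]
          have h2 : (0:ℝ) ≤ c ^ (-(2*s)) := by positivity
          nlinarith
  -- tail bound
  have htail : ∑' k : ℕ, F (N + k) ≤ ENNReal.ofReal (3 * c ^ (1 - 2*s)) := by
    have hterm : ∀ k : ℕ, F (N + k) ≤ ENNReal.ofReal (((N + k : ℕ):ℝ) ^ (-(2*s))) := by
      intro k
      apply ENNReal.ofReal_le_ofReal
      have hnk1 : (1:ℝ) ≤ ((N + k : ℕ):ℝ) := by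
        have : 1 ≤ N + k := le_trans hN1 (Nat.le_add_right _ _)
        exact_mod_cast this
      have h1 : (((N + k:ℕ):ℝ)^2) ^ (-s) = ((N + k:ℕ):ℝ) ^ (-(2*s)) := by
        rw [← Real.rpow_natCast (((N + k:ℕ):ℝ)) 2, ← Real.rpow_mul (by linarith)]
        norm_num
      rw [← h1]
      apply Real.rpow_le_rpow_of_nonpos (by nlinarith) (by nlinarith [sq_nonneg c])
        (by linarith)
    calc ∑' k : ℕ, F (N + k) ≤ ∑' k : ℕ, ENNReal.ofReal (((N + k : ℕ):ℝ) ^ (-(2*s))) :=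
          ENNReal.tsum_le_tsum hterm
      _ ≤ ENNReal.ofReal ((1 + 1/(2*s - 1)) * (N:ℝ) ^ (1 - 2*s)) := tsum_tail_bound hp hN1
      _ ≤ ENNReal.ofReal (3 * c ^ (1 - 2*s)) := by
          apply ENNReal.ofReal_le_ofReal
          have h2 : (N:ℝ) ^ (1 - 2*s) ≤ c ^ (1 - 2*s) :=
            Real.rpow_le_rpow_of_nonpos hc0 hcN.le (by linarith)
          have h3 : 1 + 1/(2*s-1) ≤ 3 := by
            have : 1/(2*s-1) ≤ 2 := by
              rw [div_le_iff₀ (by linarith)]; linarith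
            linarith
          have h4 : (0:ℝ) ≤ (N:ℝ) ^ (1 - 2*s) := by positivity
          have h5 : (0:ℝ) ≤ c ^ (1 - 2*s) := by positivity
          nlinarith
  calc ∑' y : ℤ, ENNReal.ofReal ((c^2 + (y:ℝ)^2) ^ (-s)) = ∑' y : ℤ, F y.natAbs :=
        tsum_congr heven
    _ ≤ 2 * ∑' n : ℕ, F n := tsum_int_le F
    _ ≤ 2 * (∑ n ∈ Finset.range N, F n + ∑' k : ℕ, F (N + k)) := by
        gcongr
        exact tsum_split F N
    _ ≤ 2 * (ENNReal.ofReal (2 * c ^ (1 - 2*s)) + ENNReal.ofReal (3 * c ^ (1 - 2*s))) := by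
        gcongr
    _ = ENNReal.ofReal (10 * c ^ (1 - 2*s)) := by
        rw [← ENNReal.ofReal_add (by positivity) (by positivity)]
        rw [show (2:ℝ≥0∞) = ENNReal.ofReal 2 by norm_num]
        rw [← ENNReal.ofReal_mul (by norm_num)]
        congr 1
        ring

lemma natAbs_sq_real (y : ℤ) : ((y.natAbs : ℝ))^2 = (y:ℝ)^2 := by
  rw [Nat.cast_natAbs, Int.cast_abs, sq_abs]

set_option maxHeartbeats 1000000 in
/-- Head sum with log factor. -/
lemma sum_head {τ D : ℝ} (hτ1 : 0 < τ) (hτ2 : τ ≤ 1/2) (hD : 0 ≤ D) :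
    ∑' y : ℤ, (if (y:ℝ)^2 ≤ D then ENNReal.ofReal ((1 + (y:ℝ)^2) ^ (-τ)) else 0) ≤
      ENNReal.ofReal (6 * (1 + Real.log (2 + Real.sqrt D)) * (1 + D) ^ (1/2 - τ)) := by
  classical
  set F : ℕ → ℝ≥0∞ :=
    fun n => if ((n:ℝ))^2 ≤ D then ENNReal.ofReal ((1 + ((n:ℝ))^2) ^ (-τ)) else 0 with hF
  have heven : ∀ y : ℤ, (if (y:ℝ)^2 ≤ D then ENNReal.ofReal ((1 + (y:ℝ)^2) ^ (-τ)) else 0)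
      = F y.natAbs := by
    intro y; rw [hF]; simp only [natAbs_sq_real]
  set N : ℕ := ⌊Real.sqrt D⌋₊ + 1 with hNdef
  have hN1 : 1 ≤ N := Nat.le_add_left _ _
  have hN1R : (1:ℝ) ≤ (N:ℝ) := by exact_mod_cast hN1
  have hsN : Real.sqrt D < (N:ℝ) := by
    rw [hNdef]; push_cast; exact Nat.lt_floor_add_one _
  have hsupp : ∀ n ∉ Finset.range N, F n = 0 := by
    intro n hn
    rw [Finset.mem_range, not_lt] at hn
    have h1 : Real.sqrt D < (n:ℝ) := lt_of_lt_of_le hsN (by exact_mod_cast hn)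
    have h2 : D < (n:ℝ)^2 := by
      have := Real.sq_sqrt hD
      nlinarith [Real.sqrt_nonneg D]
    rw [hF]; simp only [if_neg (not_le.mpr h2)]
  have hNsq : (N:ℝ)^2 ≤ 2 * (1 + D) := by
    have h1 : (N:ℝ) ≤ Real.sqrt D + 1 := by
      rw [hNdef]; push_cast
      have := Nat.floor_le (Real.sqrt_nonneg D)
      linarith
    have h2 := Real.sq_sqrt hD
    nlinarith [Real.sqrt_nonneg D, sq_nonneg (Real.sqrt D - 1)]
  have hterm : ∀ n ∈ Finset.range N,
      F n ≤ ENNReal.ofReal (2 * (N:ℝ) ^ (1 - 2*τ) * (((n:ℝ)) + 1)⁻¹) := by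
    intro n hn
    rw [Finset.mem_range] at hn
    rw [hF]
    dsimp only
    split_ifs with h
    · apply ENNReal.ofReal_le_ofReal
      have hNpow1 : (1:ℝ) ≤ (N:ℝ) ^ (1 - 2*τ) :=
        Real.one_le_rpow hN1R (by linarith)
      rcases Nat.eq_zero_or_pos n with hn0 | hn0
      · subst hn0
        simp only [Nat.cast_zero]
        norm_num
        nlinarith
      · have hnR : (1:ℝ) ≤ (n:ℝ) := by exact_mod_cast hn0
        have hnN : (n:ℝ) ≤ (N:ℝ) := by
          have : n ≤ N := le_of_lt hn
          exact_mod_cast this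
        have s1 : (1 + ((n:ℝ))^2) ^ (-τ) ≤ (((n:ℝ))^2) ^ (-τ) :=
          Real.rpow_le_rpow_of_nonpos (by nlinarith) (by nlinarith) (by linarith)
        have s2 : (((n:ℝ))^2) ^ (-τ) = (n:ℝ) ^ (-(2*τ)) := by
          rw [← Real.rpow_natCast ((n:ℝ)) 2, ← Real.rpow_mul (by linarith)]
          congr 1
          push_cast
          ring
        have s3 : (n:ℝ) ^ (-(2*τ)) = (n:ℝ) ^ (-1 + (1 - 2*τ)) := by congr 1; ring
        have s4 : (n:ℝ) ^ (-1 + (1-2*τ)) = ((n:ℝ))⁻¹ * (n:ℝ) ^ (1 - 2*τ) := by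
          rw [Real.rpow_add (by linarith), Real.rpow_neg_one]
        have s5 : (n:ℝ) ^ (1 - 2*τ) ≤ (N:ℝ) ^ (1 - 2*τ) :=
          Real.rpow_le_rpow (by linarith) hnN (by linarith)
        have s6 : ((n:ℝ))⁻¹ ≤ 2 * (((n:ℝ)) + 1)⁻¹ := by
          have h1 : (0:ℝ) < (n:ℝ) := by linarith
          have h2 : (0:ℝ) < (n:ℝ)+1 := by linarith
          rw [show 2 * (((n:ℝ))+1)⁻¹ = 2/((n:ℝ)+1) by ring, inv_eq_one_div,
            div_le_div_iff₀ h1 h2]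
          linarith
        have hpos : (0:ℝ) ≤ (n:ℝ) ^ (1-2*τ) := by positivity
        have hposN : (0:ℝ) ≤ (N:ℝ) ^ (1-2*τ) := by positivity
        have hinv : (0:ℝ) ≤ ((n:ℝ))⁻¹ := by positivity
        have hinv1 : (0:ℝ) ≤ (((n:ℝ))+1)⁻¹ := by positivity
        calc (1 + ((n:ℝ))^2) ^ (-τ) ≤ ((n:ℝ))⁻¹ * (n:ℝ) ^ (1-2*τ) := by
              rw [← s4, ← s3, ← s2]; exact s1
          _ ≤ ((n:ℝ))⁻¹ * (N:ℝ) ^ (1-2*τ) := by nlinarith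
          _ ≤ (2 * (((n:ℝ))+1)⁻¹) * (N:ℝ) ^ (1-2*τ) := by nlinarith
          _ = 2 * (N:ℝ) ^ (1-2*τ) * (((n:ℝ))+1)⁻¹ := by ring
    · exact zero_le
  have hlogN : Real.log N ≤ Real.log (2 + Real.sqrt D) := by
    apply Real.log_le_log (by linarith)
    have h1 : (N:ℝ) ≤ Real.sqrt D + 1 := by
      rw [hNdef]; push_cast
      have := Nat.floor_le (Real.sqrt_nonneg D)
      linarith
    linarith
  have hlogN0 : 0 ≤ Real.log N := Real.log_nonneg hN1R
  have hNe : (N:ℝ) ^ (1 - 2*τ) ≤ (3/2) * (1+D) ^ (1/2 - τ) := by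
    have e1 : (N:ℝ) ^ (1 - 2*τ) = ((N:ℝ)^2) ^ ((1 - 2*τ)/2) := by
      rw [← Real.rpow_natCast ((N:ℝ)) 2, ← Real.rpow_mul (by linarith)]
      congr 1
      push_cast
      ring
    have e2 : ((N:ℝ)^2) ^ ((1-2*τ)/2) ≤ (2*(1+D)) ^ ((1-2*τ)/2) :=
      Real.rpow_le_rpow (by positivity) hNsq (by linarith)
    have e3 : (2*(1+D)) ^ ((1-2*τ)/2) = 2 ^ ((1-2*τ)/2) * (1+D) ^ ((1-2*τ)/2) :=
      Real.mul_rpow (by norm_num) (by linarith)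
    have e4 : (2:ℝ) ^ ((1-2*τ)/2) ≤ 2 ^ ((1:ℝ)/2) :=
      Real.rpow_le_rpow_of_exponent_le (by norm_num) (by linarith)
    have e5 : (2:ℝ) ^ ((1:ℝ)/2) ≤ 3/2 := by
      rw [← Real.sqrt_eq_rpow]
      rw [show (3/2 : ℝ) = Real.sqrt ((3/2)^2) from (Real.sqrt_sq (by norm_num)).symm]
      apply Real.sqrt_le_sqrt; norm_num
    have e6 : (0:ℝ) ≤ (1+D) ^ ((1-2*τ)/2) := by positivity
    have e7 : (1-2*τ)/2 = 1/2 - τ := by ring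
    calc (N:ℝ) ^ (1 - 2*τ) ≤ 2 ^ ((1-2*τ)/2) * (1+D) ^ ((1-2*τ)/2) := by
          rw [e1, ← e3]; exact e2
      _ ≤ (3/2) * (1+D) ^ ((1-2*τ)/2) :=
          mul_le_mul (e4.trans e5) le_rfl e6 (by norm_num)
      _ = (3/2) * (1+D) ^ (1/2 - τ) := by rw [e7]
  calc ∑' y : ℤ, (if (y:ℝ)^2 ≤ D then ENNReal.ofReal ((1 + (y:ℝ)^2) ^ (-τ)) else 0)
      = ∑' y : ℤ, F y.natAbs := tsum_congr heven
    _ ≤ 2 * ∑' n : ℕ, F n := tsum_int_le F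
    _ = 2 * ∑ n ∈ Finset.range N, F n := by rw [tsum_eq_sum hsupp]
    _ ≤ 2 * ∑ n ∈ Finset.range N, ENNReal.ofReal (2 * (N:ℝ) ^ (1 - 2*τ) * (((n:ℝ)) + 1)⁻¹) := by
        gcongr with n hn
        exact hterm n hn
    _ = 2 * ENNReal.ofReal (∑ n ∈ Finset.range N, 2 * (N:ℝ) ^ (1 - 2*τ) * (((n:ℝ)) + 1)⁻¹) := by
        rw [ENNReal.ofReal_sum_of_nonneg]
        intro i _; positivity
    _ ≤ 2 * ENNReal.ofReal (2 * (N:ℝ) ^ (1 - 2*τ) * (1 + Real.log N)) := by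
        refine mul_le_mul_right (ENNReal.ofReal_le_ofReal ?_) _
        rw [← Finset.mul_sum]
        have := harmonic_sum_bound N
        have hp : (0:ℝ) ≤ 2 * (N:ℝ) ^ (1-2*τ) := by positivity
        nlinarith [Finset.sum_nonneg (fun (i:ℕ) (_ : i ∈ Finset.range N) =>
          (by positivity : (0:ℝ) ≤ ((i:ℝ)+1)⁻¹))]
    _ ≤ ENNReal.ofReal (6 * (1 + Real.log (2 + Real.sqrt D)) * (1 + D) ^ (1/2 - τ)) := by
        rw [show (2:ℝ≥0∞) = ENNReal.ofReal 2 by norm_num, ← ENNReal.ofReal_mul (by norm_num)]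
        apply ENNReal.ofReal_le_ofReal
        have hpos : (0:ℝ) ≤ (1+D) ^ (1/2-τ) := by positivity
        have hl2 : (0:ℝ) ≤ Real.log (2 + Real.sqrt D) := by
          apply Real.log_nonneg
          have := Real.sqrt_nonneg D
          linarith
        have hNpow : (0:ℝ) ≤ (N:ℝ) ^ (1-2*τ) := by positivity
        nlinarith [mul_le_mul hNe (by linarith : 1 + Real.log N ≤ 1 + Real.log (2 + Real.sqrt D))
          (by linarith) (by positivity)]

/-- Tail sum bound. -/
lemma sum_tail {u E : ℝ} (hu : 1 < u) (hu2 : u ≤ 3/2) (hE : 0 ≤ E) :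
    ∑' y : ℤ, (if E < (y:ℝ)^2 then ENNReal.ofReal ((1 + (y:ℝ)^2) ^ (-u)) else 0) ≤
      ENNReal.ofReal (8 * (1 + E) ^ ((1 - 2*u)/2)) := by
  classical
  set F : ℕ → ℝ≥0∞ :=
    fun n => if E < ((n:ℝ))^2 then ENNReal.ofReal ((1 + ((n:ℝ))^2) ^ (-u)) else 0 with hF
  have heven : ∀ y : ℤ, (if E < (y:ℝ)^2 then ENNReal.ofReal ((1 + (y:ℝ)^2) ^ (-u)) else 0)
      = F y.natAbs := by
    intro y; rw [hF]; simp only [natAbs_sq_real]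
  set N : ℕ := ⌊Real.sqrt E⌋₊ + 1 with hNdef
  have hN1 : 1 ≤ N := Nat.le_add_left _ _
  have hN1R : (1:ℝ) ≤ (N:ℝ) := by exact_mod_cast hN1
  have hsN : Real.sqrt E < (N:ℝ) := by
    rw [hNdef]; push_cast; exact Nat.lt_floor_add_one _
  have hNsq : (1 + E) / 2 ≤ (N:ℝ)^2 := by
    have h2 := Real.sq_sqrt hE
    nlinarith [Real.sqrt_nonneg E]
  have hhead : ∀ n ∈ Finset.range N, F n = 0 := by
    intro n hn
    rw [Finset.mem_range] at hn
    have h1 : (n:ℝ) ≤ Real.sqrt E := by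
      rw [hNdef] at hn
      have h2 : n ≤ ⌊Real.sqrt E⌋₊ := by omega
      calc (n:ℝ) ≤ (⌊Real.sqrt E⌋₊ : ℝ) := by exact_mod_cast h2
        _ ≤ Real.sqrt E := Nat.floor_le (Real.sqrt_nonneg E)
    have h2 : ((n:ℝ))^2 ≤ E := by
      have h3 := Real.sq_sqrt hE
      nlinarith [Nat.cast_nonneg (α := ℝ) n]
    rw [hF]; dsimp only; rw [if_neg (not_lt.mpr h2)]
  have htail : ∀ k : ℕ, F (N + k) ≤ ENNReal.ofReal (((N + k : ℕ):ℝ) ^ (-(2*u))) := by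
    intro k
    rw [hF]; dsimp only
    split_ifs with h
    · apply ENNReal.ofReal_le_ofReal
      have hnk1 : (1:ℝ) ≤ ((N + k : ℕ):ℝ) := by
        have : 1 ≤ N + k := le_trans hN1 (Nat.le_add_right _ _)
        exact_mod_cast this
      have h1 : (((N + k:ℕ):ℝ)^2) ^ (-u) = ((N + k:ℕ):ℝ) ^ (-(2*u)) := by
        rw [← Real.rpow_natCast (((N + k:ℕ):ℝ)) 2, ← Real.rpow_mul (by linarith)]
        congr 1; push_cast; ring
      rw [← h1]
      exact Real.rpow_le_rpow_of_nonpos (by nlinarith) (by nlinarith) (by linarith)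
    · exact zero_le
  have hNe : (N:ℝ) ^ (1 - 2*u) ≤ 2 * (1+E) ^ ((1 - 2*u)/2) := by
    have e1 : (N:ℝ) ^ (1 - 2*u) = ((N:ℝ)^2) ^ ((1 - 2*u)/2) := by
      rw [← Real.rpow_natCast ((N:ℝ)) 2, ← Real.rpow_mul (by linarith)]
      congr 1; push_cast; ring
    have e2 : ((N:ℝ)^2) ^ ((1-2*u)/2) ≤ ((1+E)/2) ^ ((1-2*u)/2) :=
      Real.rpow_le_rpow_of_nonpos (by linarith) hNsq (by linarith)
    have e3 : ((1+E)/2) ^ ((1-2*u)/2) = (1+E) ^ ((1-2*u)/2) * ((2:ℝ) ^ ((1-2*u)/2))⁻¹ := by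
      rw [Real.div_rpow (by linarith) (by norm_num)]
      ring
    have e4 : ((2:ℝ) ^ ((1-2*u)/2))⁻¹ = (2:ℝ) ^ ((2*u-1)/2) := by
      rw [← Real.rpow_neg (by norm_num)]
      congr 1; ring
    have e5 : (2:ℝ) ^ ((2*u-1)/2) ≤ 2 := by
      calc (2:ℝ) ^ ((2*u-1)/2) ≤ (2:ℝ) ^ (1:ℝ) :=
            Real.rpow_le_rpow_of_exponent_le (by norm_num) (by linarith)
        _ = 2 := Real.rpow_one 2
    have e6 : (0:ℝ) ≤ (1+E) ^ ((1-2*u)/2) := by positivity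
    calc (N:ℝ) ^ (1 - 2*u) ≤ ((1+E)/2) ^ ((1-2*u)/2) := by rw [e1]; exact e2
      _ = (1+E) ^ ((1-2*u)/2) * ((2:ℝ) ^ ((1-2*u)/2))⁻¹ := e3
      _ ≤ 2 * (1+E) ^ ((1-2*u)/2) := by
          rw [e4]
          nlinarith
  calc ∑' y : ℤ, (if E < (y:ℝ)^2 then ENNReal.ofReal ((1 + (y:ℝ)^2) ^ (-u)) else 0)
      = ∑' y : ℤ, F y.natAbs := tsum_congr heven
    _ ≤ 2 * ∑' n : ℕ, F n := tsum_int_le F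
    _ ≤ 2 * (∑ n ∈ Finset.range N, F n + ∑' k : ℕ, F (N + k)) := by
        exact mul_le_mul_right (tsum_split F N) _
    _ = 2 * ∑' k : ℕ, F (N + k) := by
        rw [Finset.sum_eq_zero hhead, zero_add]
    _ ≤ 2 * ∑' k : ℕ, ENNReal.ofReal (((N + k : ℕ):ℝ) ^ (-(2*u))) :=
        mul_le_mul_right (ENNReal.tsum_le_tsum htail) _
    _ ≤ 2 * ENNReal.ofReal ((1 + 1/(2*u - 1)) * (N:ℝ) ^ (1 - 2*u)) :=
        mul_le_mul_right (tsum_tail_bound (by linarith) hN1) _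
    _ ≤ ENNReal.ofReal (8 * (1 + E) ^ ((1 - 2*u)/2)) := by
        rw [show (2:ℝ≥0∞) = ENNReal.ofReal 2 by norm_num, ← ENNReal.ofReal_mul (by norm_num)]
        apply ENNReal.ofReal_le_ofReal
        have h1 : 1 + 1/(2*u-1) ≤ 2 := by
          have : 1/(2*u-1) ≤ 1 := by
            rw [div_le_one (by linarith)]; linarith
          linarith
        have h2 : (0:ℝ) ≤ (N:ℝ) ^ (1-2*u) := by positivity
        have h3 : (0:ℝ) ≤ (1+E) ^ ((1-2*u)/2) := by positivity
        nlinarith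

/-- Line bound in the form used for 2D sums. -/
lemma line_bound {s : ℝ} (hs : 3/4 ≤ s) (x : ℤ) :
    ∑' y : ℤ, ENNReal.ofReal ((1 + ((x:ℝ)^2 + (y:ℝ)^2)) ^ (-s)) ≤
      ENNReal.ofReal (10 * (1 + (x:ℝ)^2) ^ ((1 - 2*s)/2)) := by
  have h0 : (0:ℝ) ≤ 1 + (x:ℝ)^2 := by positivity
  set c : ℝ := Real.sqrt (1 + (x:ℝ)^2) with hcdef
  have hc : 1 ≤ c := by
    nlinarith [Real.sq_sqrt h0, Real.sqrt_nonneg (1 + (x:ℝ)^2), sq_nonneg ((x:ℝ))]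
  have hc2 : c^2 = 1 + (x:ℝ)^2 := Real.sq_sqrt h0
  have hpow : c ^ (1 - 2*s) = (1 + (x:ℝ)^2) ^ ((1 - 2*s)/2) := by
    rw [hcdef, Real.sqrt_eq_rpow, ← Real.rpow_mul h0]
    congr 1
    ring
  calc ∑' y : ℤ, ENNReal.ofReal ((1 + ((x:ℝ)^2 + (y:ℝ)^2)) ^ (-s))
      = ∑' y : ℤ, ENNReal.ofReal ((c^2 + (y:ℝ)^2) ^ (-s)) := by
        apply tsum_congr; intro y; rw [hc2]; ring_nf
    _ ≤ ENNReal.ofReal (10 * c ^ (1 - 2*s)) := sum_line hs hc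
    _ = ENNReal.ofReal (10 * (1 + (x:ℝ)^2) ^ ((1 - 2*s)/2)) := by rw [hpow]

/-- reciprocal-quarter bound -/
lemma four_bound {A B s : ℝ} (hA : 1 ≤ A) (hB : 0 ≤ B) (h : A ≤ 4*(1+B))
    (hs : 0 ≤ s) (hs1 : s ≤ 1) :
    (1+B) ^ (-s) ≤ 4 * A ^ (-s) := by
  have hA0 : (0:ℝ) < A := by linarith
  have hB0 : (0:ℝ) < 1 + B := by linarith
  have h1 : A ^ s ≤ 4 * (1+B) ^ s := by
    calc A ^ s ≤ (4*(1+B)) ^ s := Real.rpow_le_rpow hA0.le h (by linarith)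
      _ = 4 ^ s * (1+B) ^ s := Real.mul_rpow (by norm_num) hB0.le
      _ ≤ 4 * (1+B) ^ s := by
          have h2 : (4:ℝ) ^ s ≤ 4 ^ (1:ℝ) :=
            Real.rpow_le_rpow_of_exponent_le (by norm_num) hs1
          have h3 : (0:ℝ) ≤ (1+B) ^ s := by positivity
          rw [Real.rpow_one] at h2
          nlinarith
  have h4 : (0:ℝ) < A ^ s := by positivity
  have h5 : (0:ℝ) < (1+B) ^ s := by positivity
  rw [Real.rpow_neg hB0.le, Real.rpow_neg hA0.le, inv_eq_one_div, inv_eq_one_div,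
      show 4 * (1/(A^s)) = 4/(A^s) by ring, div_le_div_iff₀ h5 h4]
  nlinarith

lemma nsq_nonneg (p : ℤ × ℤ) : 0 ≤ nsq p := by unfold nsq; positivity

lemma nsq_pair (a b : ℤ) : nsq (a, b) = (a:ℝ)^2 + (b:ℝ)^2 := rfl

/-- 2D head piece. -/
lemma headpiece {β D : ℝ} (hβ1 : 3/2 < β) (hβ2 : β ≤ 2) (hD : 0 ≤ D) :
    ∑' r : ℤ × ℤ, (if nsq r ≤ D then ENNReal.ofReal ((1 + nsq r) ^ (-(β/2))) else 0) ≤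
      ENNReal.ofReal (60 * (1 + Real.log (2 + Real.sqrt D)) * (1 + D) ^ (1 - β/2)) := by
  classical
  rw [ENNReal.tsum_prod']
  have hinner : ∀ a : ℤ,
      (∑' b : ℤ, if nsq (a, b) ≤ D then ENNReal.ofReal ((1 + nsq (a, b)) ^ (-(β/2))) else 0)
      ≤ (if (a:ℝ)^2 ≤ D then
          ENNReal.ofReal (10 * (1 + (a:ℝ)^2) ^ ((1 - β)/2)) else 0) := by
    intro a
    by_cases ha : (a:ℝ)^2 ≤ D
    · rw [if_pos ha]
      have h8 : ∀ b : ℤ,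
          (if nsq (a, b) ≤ D then ENNReal.ofReal ((1 + nsq (a, b)) ^ (-(β/2))) else 0) ≤
          ENNReal.ofReal ((1 + ((a:ℝ)^2 + (b:ℝ)^2)) ^ (-(β/2))) := by
        intro b
        rw [nsq_pair]
        split_ifs with h
        · exact le_rfl
        · exact zero_le
      calc (∑' b : ℤ, if nsq (a, b) ≤ D then ENNReal.ofReal ((1 + nsq (a, b)) ^ (-(β/2))) else 0)
          ≤ ∑' b : ℤ, ENNReal.ofReal ((1 + ((a:ℝ)^2 + (b:ℝ)^2)) ^ (-(β/2))) :=
            ENNReal.tsum_le_tsum h8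
        _ ≤ ENNReal.ofReal (10 * (1 + (a:ℝ)^2) ^ ((1 - 2*(β/2))/2)) :=
            line_bound (by linarith) a
        _ = ENNReal.ofReal (10 * (1 + (a:ℝ)^2) ^ ((1 - β)/2)) := by
            congr 2
            ring_nf
    · rw [if_neg ha]
      have hz : ∀ b : ℤ,
          (if nsq (a, b) ≤ D then ENNReal.ofReal ((1 + nsq (a, b)) ^ (-(β/2))) else 0) = 0 := by
        intro b
        rw [if_neg]
        rw [nsq_pair]
        push_neg
        nlinarith [sq_nonneg ((b:ℝ)), not_le.mp ha]
      rw [tsum_congr hz, tsum_zero]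
  set τ : ℝ := (β - 1)/2 with hτ
  have hτ1 : 0 < τ := by rw [hτ]; linarith
  have hτ2 : τ ≤ 1/2 := by rw [hτ]; linarith
  calc (∑' a : ℤ, ∑' b : ℤ,
        if nsq (a, b) ≤ D then ENNReal.ofReal ((1 + nsq (a, b)) ^ (-(β/2))) else 0)
      ≤ ∑' a : ℤ, (if (a:ℝ)^2 ≤ D then
          ENNReal.ofReal (10 * (1 + (a:ℝ)^2) ^ ((1 - β)/2)) else 0) :=
        ENNReal.tsum_le_tsum hinner
    _ = ENNReal.ofReal 10 * ∑' a : ℤ,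
        (if (a:ℝ)^2 ≤ D then ENNReal.ofReal ((1 + (a:ℝ)^2) ^ (-τ)) else 0) := by
        rw [← ENNReal.tsum_mul_left]
        apply tsum_congr
        intro a
        split_ifs with h
        · rw [← ENNReal.ofReal_mul (by norm_num)]
          congr 2
          rw [hτ]
          ring_nf
        · rw [mul_zero]
    _ ≤ ENNReal.ofReal 10 *
        ENNReal.ofReal (6 * (1 + Real.log (2 + Real.sqrt D)) * (1 + D) ^ (1/2 - τ)) :=
        mul_le_mul_right (sum_head hτ1 hτ2 hD) _
    _ = ENNReal.ofReal (60 * (1 + Real.log (2 + Real.sqrt D)) * (1 + D) ^ (1 - β/2)) := by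
        rw [← ENNReal.ofReal_mul (by norm_num)]
        congr 1
        rw [hτ, show 1/2 - (β-1)/2 = 1 - β/2 by ring]
        ring

/-- 2D tail piece (condition on first coordinate). -/
lemma tailpiece {β E : ℝ} (hβ1 : 3/2 < β) (hβ2 : β ≤ 2) (hE : 0 ≤ E) :
    ∑' r : ℤ × ℤ, (if E < ((r.1:ℝ))^2 then ENNReal.ofReal ((1 + nsq r) ^ (-β)) else 0) ≤
      ENNReal.ofReal (80 * (1 + E) ^ (1 - β)) := by
  classical
  rw [ENNReal.tsum_prod']
  have hinner : ∀ a : ℤ,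
      (∑' b : ℤ, if E < ((a:ℝ))^2 then ENNReal.ofReal ((1 + nsq (a, b)) ^ (-β)) else 0)
      ≤ (if E < ((a:ℝ))^2 then
          ENNReal.ofReal (10 * (1 + (a:ℝ)^2) ^ ((1 - 2*β)/2)) else 0) := by
    intro a
    by_cases ha : E < ((a:ℝ))^2
    · simp only [if_pos ha]
      calc (∑' b : ℤ, ENNReal.ofReal ((1 + nsq (a, b)) ^ (-β)))
          = ∑' b : ℤ, ENNReal.ofReal ((1 + ((a:ℝ)^2 + (b:ℝ)^2)) ^ (-β)) := by
            apply tsum_congr; intro b; rw [nsq_pair]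
        _ ≤ ENNReal.ofReal (10 * (1 + (a:ℝ)^2) ^ ((1 - 2*β)/2)) :=
            line_bound (by linarith) a
    · simp only [if_neg ha, tsum_zero]
      exact le_rfl
  set u : ℝ := β - 1/2 with hu
  have hu1 : 1 < u := by rw [hu]; linarith
  have hu2 : u ≤ 3/2 := by rw [hu]; linarith
  calc (∑' a : ℤ, ∑' b : ℤ,
        if E < ((a:ℝ))^2 then ENNReal.ofReal ((1 + nsq (a, b)) ^ (-β)) else 0)
      ≤ ∑' a : ℤ, (if E < ((a:ℝ))^2 then
          ENNReal.ofReal (10 * (1 + (a:ℝ)^2) ^ ((1 - 2*β)/2)) else 0) :=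
        ENNReal.tsum_le_tsum hinner
    _ = ENNReal.ofReal 10 * ∑' a : ℤ,
        (if E < ((a:ℝ))^2 then ENNReal.ofReal ((1 + (a:ℝ)^2) ^ (-u)) else 0) := by
        rw [← ENNReal.tsum_mul_left]
        apply tsum_congr
        intro a
        split_ifs with h
        · rw [← ENNReal.ofReal_mul (by norm_num)]
          congr 2
          rw [hu]
          ring_nf
        · rw [mul_zero]
    _ ≤ ENNReal.ofReal 10 * ENNReal.ofReal (8 * (1 + E) ^ ((1 - 2*u)/2)) :=
        mul_le_mul_right (sum_tail hu1 hu2 hE) _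
    _ = ENNReal.ofReal (80 * (1 + E) ^ (1 - β)) := by
        rw [← ENNReal.ofReal_mul (by norm_num)]
        congr 1
        rw [hu, show (1 - 2*(β - 1/2))/2 = 1 - β by ring]
        ring


lemma nsq_neg (p : ℤ × ℤ) : nsq (-p) = nsq p := by
  unfold nsq
  rw [Prod.fst_neg, Prod.snd_neg]
  push_cast
  ring

lemma nsq_swap (p : ℤ × ℤ) : nsq (p.2, p.1) = nsq p := by
  unfold nsq; ring

lemma nsq_tri (r d : ℤ × ℤ) : nsq d ≤ 2 * nsq r + 2 * nsq (r + d) := by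
  unfold nsq
  rw [Prod.fst_add, Prod.snd_add]
  push_cast
  nlinarith [sq_nonneg (2*(r.1:ℝ) + (d.1:ℝ)), sq_nonneg (2*(r.2:ℝ) + (d.2:ℝ))]

lemma half_bound {D e : ℝ} (hD : 0 ≤ D) (he1 : -1 ≤ e) (he0 : e ≤ 0) :
    (1 + D/2) ^ e ≤ 2 * (1 + D) ^ e := by
  have h1 : (1+D)/2 ≤ 1 + D/2 := by linarith
  have h2 : (1 + D/2) ^ e ≤ ((1+D)/2) ^ e :=
    Real.rpow_le_rpow_of_nonpos (by linarith) h1 he0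
  have h3 : ((1+D)/2) ^ e = (1+D) ^ e * ((2:ℝ) ^ e)⁻¹ := by
    rw [Real.div_rpow (by linarith) (by norm_num)]
    ring
  have h4 : ((2:ℝ) ^ e)⁻¹ = (2:ℝ) ^ (-e) := by
    rw [← Real.rpow_neg (by norm_num)]
  have h5 : (2:ℝ) ^ (-e) ≤ 2 := by
    calc (2:ℝ) ^ (-e) ≤ (2:ℝ) ^ (1:ℝ) :=
          Real.rpow_le_rpow_of_exponent_le (by norm_num) (by linarith)
      _ = 2 := Real.rpow_one 2
  have h6 : (0:ℝ) ≤ (1+D) ^ e := by positivity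
  calc (1 + D/2) ^ e ≤ (1+D) ^ e * ((2:ℝ) ^ e)⁻¹ := by rw [← h3]; exact h2
    _ ≤ 2 * (1+D) ^ e := by rw [h4]; nlinarith





end BesselAux

open BesselAux Real

/-- Convolution bound for translated fractional-Bessel coefficients:
for `3/2 < β ≤ 2`,
`∑_r (1+|r|²)^{-β/2} (1+|r+d|²)^{-β/2} ≤ C (1+log(2+|d|)) (1+|d|²)^{-(β-1)}`. -/
theorem bessel_convolution_schur_bound (β : ℝ) (hβ1 : 3 / 2 < β) (hβ2 : β ≤ 2) :
    ∃ C : ℝ, 0 < C ∧ ∀ d : ℤ × ℤ,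
      ∑' r : ℤ × ℤ,
        ENNReal.ofReal ((1 + nsq r) ^ (-(β / 2)) * (1 + nsq (r + d)) ^ (-(β / 2))) ≤
      ENNReal.ofReal
        (C * (1 + Real.log (2 + Real.sqrt (nsq d))) * (1 + nsq d) ^ (-(β - 1))) := by
  classical
  refine ⟨1120, by norm_num, fun d => ?_⟩
  set D : ℝ := nsq d with hDdef
  have hD : 0 ≤ D := nsq_nonneg d
  set L : ℝ := 1 + Real.log (2 + Real.sqrt D) with hLdef
  have hL1 : 1 ≤ L := by
    have h0 : (0:ℝ) ≤ Real.log (2 + Real.sqrt D) :=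
      Real.log_nonneg (by nlinarith [Real.sqrt_nonneg D])
    rw [hLdef]; linarith
  have hD1 : (0:ℝ) < 1 + D := by linarith
  set F : ℤ × ℤ → ℝ≥0∞ := fun r =>
    ENNReal.ofReal ((1 + nsq r) ^ (-(β / 2)) * (1 + nsq (r + d)) ^ (-(β / 2))) with hF
  set G : ℤ × ℤ → ℝ≥0∞ := fun r => if nsq r ≤ nsq (r + d) then F r else 0 with hG
  set G1 : ℤ × ℤ → ℝ≥0∞ := fun r =>
    if nsq r ≤ D then
      ENNReal.ofReal ((4 * (1 + D) ^ (-(β/2))) * (1 + nsq r) ^ (-(β/2))) else 0 with hG1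
  set G2 : ℤ × ℤ → ℝ≥0∞ := fun r =>
    if D < nsq r then ENNReal.ofReal ((1 + nsq r) ^ (-β)) else 0 with hG2
  set G2x : ℤ × ℤ → ℝ≥0∞ := fun r =>
    if D/2 < ((r.1:ℝ))^2 then ENNReal.ofReal ((1 + nsq r) ^ (-β)) else 0 with hG2x
  set G2y : ℤ × ℤ → ℝ≥0∞ := fun r =>
    if D/2 < ((r.2:ℝ))^2 then ENNReal.ofReal ((1 + nsq r) ^ (-β)) else 0 with hG2y
  -- symmetrization
  have hinv : Function.Involutive (fun r : ℤ × ℤ => -r - d) := by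
    intro r; ring
  have hσ : ∑' r : ℤ × ℤ, G (-r - d) = ∑' r, G r := by
    have he := (hinv.toPerm _).tsum_eq G
    rw [← he]
    apply tsum_congr
    intro r
    congr 1
  have hFG : ∀ r, F r ≤ G r + G (-r - d) := by
    intro r
    by_cases h : nsq r ≤ nsq (r + d)
    · rw [hG]; dsimp only; rw [if_pos h]; exact le_self_add
    · have h1 : nsq (-r - d) = nsq (r + d) := by
        rw [show -r - d = -(r + d) by ring, nsq_neg]
      have h2 : nsq ((-r - d) + d) = nsq r := by
        rw [show -r - d + d = -r by ring, nsq_neg]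
      have hcond : nsq (-r - d) ≤ nsq ((-r - d) + d) := by
        rw [h1, h2]; exact (not_le.mp h).le
      rw [hG]; dsimp only; rw [if_neg h, if_pos hcond, zero_add, hF]
      dsimp only
      rw [h1, h2]
      exact le_of_eq (by rw [mul_comm])
  have hstep1 : ∑' r, F r ≤ 2 * ∑' r, G r := by
    calc ∑' r, F r ≤ ∑' r, (G r + G (-r - d)) := ENNReal.tsum_le_tsum hFG
      _ = ∑' r, G r + ∑' r, G (-r - d) := ENNReal.tsum_add
      _ = 2 * ∑' r, G r := by rw [hσ, two_mul]
  -- split G ≤ G1 + G2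
  have hsplit : ∀ r, G r ≤ G1 r + G2 r := by
    intro r
    rw [hG]; dsimp only
    split_ifs with h
    · by_cases h2 : nsq r ≤ D
      · have hq : 1 + D ≤ 4 * (1 + nsq (r + d)) := by
          have ht := nsq_tri r d
          have h3 := nsq_nonneg r
          have h4 := nsq_nonneg (r + d)
          rw [hDdef]
          linarith
        have h5 : (1 + nsq (r+d)) ^ (-(β/2)) ≤ 4 * (1 + D) ^ (-(β/2)) :=
          four_bound (by linarith) (nsq_nonneg _) hq (by linarith) (by linarith)
        have hle : F r ≤ G1 r := by
          rw [hF, hG1]; dsimp only; rw [if_pos h2]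
          apply ENNReal.ofReal_le_ofReal
          have e1 : (0:ℝ) ≤ (1 + nsq r) ^ (-(β/2)) :=
            Real.rpow_nonneg (by linarith [nsq_nonneg r]) _
          calc (1 + nsq r) ^ (-(β/2)) * (1 + nsq (r+d)) ^ (-(β/2))
              ≤ (1 + nsq r) ^ (-(β/2)) * (4 * (1 + D) ^ (-(β/2))) :=
                mul_le_mul_of_nonneg_left h5 e1
            _ = (4 * (1 + D) ^ (-(β/2))) * (1 + nsq r) ^ (-(β/2)) := by ring
        exact hle.trans le_self_add
      · have h6 : D < nsq r := not_le.mp h2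
        have hle : F r ≤ G2 r := by
          rw [hF, hG2]; dsimp only; rw [if_pos h6]
          apply ENNReal.ofReal_le_ofReal
          have hpos : (0:ℝ) < 1 + nsq r := by
            have := nsq_nonneg r; linarith
          have h7 : (1 + nsq (r+d)) ^ (-(β/2)) ≤ (1 + nsq r) ^ (-(β/2)) :=
            Real.rpow_le_rpow_of_nonpos hpos (by linarith) (by linarith)
          calc (1 + nsq r) ^ (-(β/2)) * (1 + nsq (r+d)) ^ (-(β/2))
              ≤ (1 + nsq r) ^ (-(β/2)) * (1 + nsq r) ^ (-(β/2)) :=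
                mul_le_mul_of_nonneg_left h7 (Real.rpow_nonneg hpos.le _)
            _ = (1 + nsq r) ^ (-β) := by
                rw [← Real.rpow_add hpos]; congr 1; ring
        calc F r ≤ G2 r := hle
          _ ≤ G1 r + G2 r := le_add_self
    · exact zero_le
  -- G1 sum
  have hc0 : (0:ℝ) ≤ 4 * (1 + D) ^ (-(β/2)) := by positivity
  have hG1sum : ∑' r, G1 r ≤ ENNReal.ofReal (240 * L * (1 + D) ^ (1 - β)) := by
    have hG1eq : ∀ r, G1 r = ENNReal.ofReal (4 * (1 + D) ^ (-(β/2))) *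
        (if nsq r ≤ D then ENNReal.ofReal ((1 + nsq r) ^ (-(β/2))) else 0) := by
      intro r
      rw [hG1]; dsimp only
      split_ifs with h
      · rw [ENNReal.ofReal_mul hc0]
      · rw [mul_zero]
    calc ∑' r, G1 r
        = ENNReal.ofReal (4 * (1 + D) ^ (-(β/2))) *
          ∑' r : ℤ × ℤ, (if nsq r ≤ D then ENNReal.ofReal ((1 + nsq r) ^ (-(β/2))) else 0) := by
          rw [tsum_congr hG1eq, ENNReal.tsum_mul_left]
      _ ≤ ENNReal.ofReal (4 * (1 + D) ^ (-(β/2))) *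
          ENNReal.ofReal (60 * L * (1 + D) ^ (1 - β/2)) :=
          mul_le_mul_right (headpiece hβ1 hβ2 hD) _
      _ = ENNReal.ofReal (240 * L * (1 + D) ^ (1 - β)) := by
          rw [← ENNReal.ofReal_mul hc0]
          congr 1
          have hr : (1 + D) ^ (-(β/2)) * (1 + D) ^ (1 - β/2) = (1 + D) ^ (1 - β) := by
            rw [← Real.rpow_add hD1]; congr 1; ring
          calc 4 * (1 + D) ^ (-(β/2)) * (60 * L * (1 + D) ^ (1 - β/2))
              = 240 * L * ((1 + D) ^ (-(β/2)) * (1 + D) ^ (1 - β/2)) := by ring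
            _ = 240 * L * (1 + D) ^ (1 - β) := by rw [hr]
  -- G2 sum
  have hsplit2 : ∀ r, G2 r ≤ G2x r + G2y r := by
    intro r
    rw [hG2]; dsimp only
    split_ifs with h
    · have hor : D/2 < ((r.1:ℝ))^2 ∨ D/2 < ((r.2:ℝ))^2 := by
        by_contra hc
        push_neg at hc
        have h9 : nsq r ≤ D := by
          have : nsq r = ((r.1:ℝ))^2 + ((r.2:ℝ))^2 := rfl
          rw [this]; linarith [hc.1, hc.2]
        linarith
      rcases hor with h1 | h1
      · calc ENNReal.ofReal ((1 + nsq r) ^ (-β)) = G2x r := by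
              rw [hG2x]; dsimp only; rw [if_pos h1]
          _ ≤ G2x r + G2y r := le_self_add
      · calc ENNReal.ofReal ((1 + nsq r) ^ (-β)) = G2y r := by
              rw [hG2y]; dsimp only; rw [if_pos h1]
          _ ≤ G2x r + G2y r := le_add_self
    · exact zero_le
  have htp : ENNReal.ofReal (80 * (1 + D/2) ^ (1 - β)) ≤
      ENNReal.ofReal (160 * (1 + D) ^ (1 - β)) := by
    apply ENNReal.ofReal_le_ofReal
    have := half_bound hD (by linarith : (-1:ℝ) ≤ 1 - β) (by linarith : (1:ℝ) - β ≤ 0)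
    nlinarith [Real.rpow_nonneg hD1.le (1-β)]
  have hG2xsum : ∑' r, G2x r ≤ ENNReal.ofReal (160 * (1 + D) ^ (1 - β)) := by
    refine le_trans ?_ htp
    have := tailpiece hβ1 hβ2 (by linarith : (0:ℝ) ≤ D/2)
    exact this
  have hG2ysum : ∑' r, G2y r ≤ ENNReal.ofReal (160 * (1 + D) ^ (1 - β)) := by
    refine le_trans ?_ htp
    have hswap : ∑' r : ℤ × ℤ, G2y r =
        ∑' r : ℤ × ℤ, (if D/2 < ((r.1:ℝ))^2 then ENNReal.ofReal ((1 + nsq r) ^ (-β)) else 0) := by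
      rw [← (Equiv.prodComm ℤ ℤ).tsum_eq G2y]
      apply tsum_congr
      intro r
      rw [hG2y]
      dsimp only [Equiv.prodComm_apply, Prod.swap]
      rw [show nsq (r.2, r.1) = nsq r from nsq_swap r]
    rw [hswap]
    exact tailpiece hβ1 hβ2 (by linarith : (0:ℝ) ≤ D/2)
  have hG2sum : ∑' r, G2 r ≤ ENNReal.ofReal (320 * (1 + D) ^ (1 - β)) := by
    calc ∑' r, G2 r ≤ ∑' r, (G2x r + G2y r) := ENNReal.tsum_le_tsum hsplit2
      _ = ∑' r, G2x r + ∑' r, G2y r := ENNReal.tsum_add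
      _ ≤ ENNReal.ofReal (160 * (1 + D) ^ (1 - β)) + ENNReal.ofReal (160 * (1 + D) ^ (1 - β)) :=
          add_le_add hG2xsum hG2ysum
      _ = ENNReal.ofReal (320 * (1 + D) ^ (1 - β)) := by
          rw [← ENNReal.ofReal_add (by positivity) (by positivity)]
          congr 1; ring
  -- combine
  have hfinal : ∑' r, F r ≤ ENNReal.ofReal (1120 * L * (1 + D) ^ (1 - β)) := by
    calc ∑' r, F r ≤ 2 * ∑' r, G r := hstep1
      _ ≤ 2 * (∑' r, G1 r + ∑' r, G2 r) := by
          refine mul_le_mul_right ?_ _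
          calc ∑' r, G r ≤ ∑' r, (G1 r + G2 r) := ENNReal.tsum_le_tsum hsplit
            _ = ∑' r, G1 r + ∑' r, G2 r := ENNReal.tsum_add
      _ ≤ 2 * (ENNReal.ofReal (240 * L * (1 + D) ^ (1 - β)) +
            ENNReal.ofReal (320 * (1 + D) ^ (1 - β))) :=
          mul_le_mul_right (add_le_add hG1sum hG2sum) _
      _ ≤ ENNReal.ofReal (1120 * L * (1 + D) ^ (1 - β)) := by
          rw [← ENNReal.ofReal_add (by positivity) (by positivity),
            show (2:ℝ≥0∞) = ENNReal.ofReal 2 by norm_num,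
            ← ENNReal.ofReal_mul (by norm_num)]
          apply ENNReal.ofReal_le_ofReal
          have hpw : (0:ℝ) ≤ (1 + D) ^ (1 - β) := by positivity
          nlinarith
  calc ∑' r : ℤ × ℤ,
        ENNReal.ofReal ((1 + nsq r) ^ (-(β / 2)) * (1 + nsq (r + d)) ^ (-(β / 2)))
      = ∑' r, F r := by rw [hF]
    _ ≤ ENNReal.ofReal (1120 * L * (1 + D) ^ (1 - β)) := hfinal
    _ = ENNReal.ofReal (1120 * (1 + Real.log (2 + Real.sqrt (nsq d))) * (1 + nsq d) ^ (-(β - 1))) := by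
        rw [hLdef, hDdef, show -(β - 1) = 1 - β by ring]
end

section
/- Let 3/2 < β ≤ 2. Then there exists a constant C > 0 such that for every real Λ ≥ 2 and every p ∈ ℤ² with 1+|p|² ≤ Λ², ∑_{r ∈ ℤ², 1+|r|² > Λ²} (1+|r−p|²)^{−β/2} (1+|r|²)^{−1} ≤ C · (1+log Λ) · Λ^{−β}. -/
open scoped ENNReal
open Finset Function

lemma nsq_nonneg (p : ℤ × ℤ) : 0 ≤ nsq p := by
  unfold nsq; positivity

lemma one_add_nsq_pos (p : ℤ × ℤ) : 0 < 1 + nsq p := by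
  have := nsq_nonneg p; linarith

/-- sup-norm of a lattice point -/
def mA (r : ℤ × ℤ) : ℕ := max r.1.natAbs r.2.natAbs

lemma cast_natAbs_sq (a : ℤ) : ((a.natAbs : ℝ)) ^ 2 = (a : ℝ) ^ 2 := by
  rw [Nat.cast_natAbs]
  push_cast
  rw [sq_abs]

lemma sq_mA_le_nsq (r : ℤ × ℤ) : ((mA r : ℝ)) ^ 2 ≤ nsq r := by
  unfold mA nsq
  rcases max_choice r.1.natAbs r.2.natAbs with h | h <;> rw [h]
  · rw [cast_natAbs_sq]; nlinarith [sq_nonneg ((r.2 : ℝ))]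
  · rw [cast_natAbs_sq]; nlinarith [sq_nonneg ((r.1 : ℝ))]

lemma nsq_le_two_sq_mA (r : ℤ × ℤ) : nsq r ≤ 2 * ((mA r : ℝ)) ^ 2 := by
  unfold mA nsq
  have h1 : ((r.1.natAbs : ℝ)) ^ 2 ≤ ((max r.1.natAbs r.2.natAbs : ℕ) : ℝ) ^ 2 := by
    have : (r.1.natAbs : ℝ) ≤ ((max r.1.natAbs r.2.natAbs : ℕ) : ℝ) := by
      exact_mod_cast le_max_left _ _
    nlinarith [Nat.cast_nonneg (α := ℝ) r.1.natAbs]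
  have h2 : ((r.2.natAbs : ℝ)) ^ 2 ≤ ((max r.1.natAbs r.2.natAbs : ℕ) : ℝ) ^ 2 := by
    have : (r.2.natAbs : ℝ) ≤ ((max r.1.natAbs r.2.natAbs : ℕ) : ℝ) := by
      exact_mod_cast le_max_right _ _
    nlinarith [Nat.cast_nonneg (α := ℝ) r.2.natAbs]
  rw [← cast_natAbs_sq r.1, ← cast_natAbs_sq r.2]
  linarith

/-- shell superset -/
noncomputable def shell (n : ℕ) : Finset (ℤ × ℤ) :=
  (Finset.Icc (-(n : ℤ)) n ×ˢ {(-(n : ℤ)), (n : ℤ)}) ∪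
    ({(-(n : ℤ)), (n : ℤ)} ×ˢ Finset.Icc (-(n : ℤ)) n)

lemma card_shell (n : ℕ) : (shell n).card ≤ 8 * n + 4 := by
  have hIcc : (Finset.Icc (-(n : ℤ)) n).card = 2 * n + 1 := by
    rw [Int.card_Icc]
    omega
  have hpair : ({(-(n : ℤ)), (n : ℤ)} : Finset ℤ).card ≤ 2 := Finset.card_insert_le _ _ |>.trans (by simp)
  calc (shell n).card ≤ (Finset.Icc (-(n : ℤ)) n ×ˢ ({(-(n : ℤ)), (n : ℤ)} : Finset ℤ)).card
        + (({(-(n : ℤ)), (n : ℤ)} : Finset ℤ) ×ˢ Finset.Icc (-(n : ℤ)) n).card :=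
        Finset.card_union_le _ _
    _ ≤ (2 * n + 1) * 2 + 2 * (2 * n + 1) := by
        rw [Finset.card_product, Finset.card_product, hIcc]
        exact Nat.add_le_add (Nat.mul_le_mul_left _ hpair) (Nat.mul_le_mul_right _ hpair)
    _ ≤ 8 * n + 4 := by omega

lemma mem_shell (r : ℤ × ℤ) : r ∈ shell (mA r) := by
  have h1 : r.1.natAbs ≤ mA r := le_max_left _ _
  have h2 : r.2.natAbs ≤ mA r := le_max_right _ _
  have hb1 : -(mA r : ℤ) ≤ r.1 ∧ r.1 ≤ (mA r : ℤ) := by omega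
  have hb2 : -(mA r : ℤ) ≤ r.2 ∧ r.2 ≤ (mA r : ℤ) := by omega
  have hm : r.1.natAbs = mA r ∨ r.2.natAbs = mA r := by
    unfold mA; rcases max_choice r.1.natAbs r.2.natAbs with h | h <;> [left; right] <;> omega
  unfold shell
  rcases hm with h | h
  · apply Finset.mem_union_right
    apply Finset.mem_product.2
    refine ⟨?_, Finset.mem_Icc.2 ⟨hb2.1, hb2.2⟩⟩
    simp only [Finset.mem_insert, Finset.mem_singleton]
    omega
  · apply Finset.mem_union_left
    apply Finset.mem_product.2
    refine ⟨Finset.mem_Icc.2 ⟨hb1.1, hb1.2⟩, ?_⟩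
    simp only [Finset.mem_insert, Finset.mem_singleton]
    omega


lemma tsum_le_shell_sum (H : ℤ × ℤ → ℝ≥0∞) (G : ℕ → ℝ≥0∞)
    (hHG : ∀ r, H r ≤ G (mA r)) :
    ∑' r, H r ≤ ∑' n, ((8 * n + 4 : ℕ) : ℝ≥0∞) * G n := by
  have step1 : ∑' r, H r ≤ ∑' r : ℤ × ℤ, G (mA r) := ENNReal.tsum_le_tsum hHG
  set i : ℤ × ℤ → Σ n : ℕ, {x // x ∈ shell n} := fun r => ⟨mA r, ⟨r, mem_shell r⟩⟩ with hi_def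
  have hinj : Injective i := by
    have : LeftInverse (fun x : Σ n : ℕ, {x // x ∈ shell n} => (x.2 : ℤ × ℤ)) i := fun r => rfl
    exact this.injective
  have step2 : ∑' r : ℤ × ℤ, G (mA r) ≤ ∑' x : Σ n : ℕ, {x // x ∈ shell n}, G x.1 := by
    have := ENNReal.tsum_comp_le_tsum_of_injective hinj (fun x : Σ n : ℕ, {x // x ∈ shell n} => G x.1)
    exact this
  have step3 : ∑' x : Σ n : ℕ, {x // x ∈ shell n}, G x.1
      = ∑' n : ℕ, ∑' _x : {x // x ∈ shell n}, G n := ENNReal.tsum_sigma' _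
  have step4 : ∀ n : ℕ, ∑' _x : {x // x ∈ shell n}, G n ≤ ((8 * n + 4 : ℕ) : ℝ≥0∞) * G n := by
    intro n
    rw [tsum_fintype]
    simp only [Finset.sum_const, nsmul_eq_mul]
    gcongr
    · simp only [Finset.card_univ, Fintype.card_coe]
      exact_mod_cast card_shell n
  calc ∑' r, H r ≤ ∑' x : Σ n : ℕ, {x // x ∈ shell n}, G x.1 := step1.trans step2
    _ = ∑' n : ℕ, ∑' _x : {x // x ∈ shell n}, G n := step3
    _ ≤ ∑' n, ((8 * n + 4 : ℕ) : ℝ≥0∞) * G n := ENNReal.tsum_le_tsum step4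

lemma rpow_step {q a : ℝ} (hq : 2 ≤ q) (ha : 2 ≤ a) :
    (q - 1) * a ^ (-q) ≤ (a - 1) ^ (1 - q) - a ^ (1 - q) := by
  have ha0 : (0:ℝ) < a := by linarith
  have ha1 : (0:ℝ) < a - 1 := by linarith
  set s := q - 1 with hs
  have hs1 : 1 ≤ s := by rw [hs]; linarith
  have hbern : 1 + s * (1 / (a - 1)) ≤ (1 + 1 / (a - 1)) ^ s :=
    one_add_mul_self_le_rpow_one_add
      (by have : (0:ℝ) < 1 / (a - 1) := by positivity
          linarith) hs1
  have heq : (1:ℝ) + 1 / (a - 1) = a / (a - 1) := by field_simp; ring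
  have h2 : 1 + s / a ≤ (a / (a - 1)) ^ s := by
    refine le_trans ?_ (heq ▸ hbern)
    have h21 : s / a ≤ s * (1 / (a - 1)) := by
      rw [div_eq_mul_one_div]
      have : 1 / a ≤ 1 / (a - 1) := by
        apply one_div_le_one_div_of_le ha1; linarith
      exact mul_le_mul_of_nonneg_left this (by linarith)
    linarith
  have h3 : a ^ (-s) * (1 + s / a) ≤ a ^ (-s) * (a / (a - 1)) ^ s :=
    mul_le_mul_of_nonneg_left h2 (Real.rpow_nonneg ha0.le _)
  have h4 : a ^ (-s) * (a / (a - 1)) ^ s = (a - 1) ^ (1 - q) := by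
    rw [Real.div_rpow ha0.le ha1.le]
    have e1 : a ^ (-s) * (a ^ s / (a - 1) ^ s) = a ^ (-s) * a ^ s / (a - 1) ^ s := by ring
    have e2 : a ^ (-s) * a ^ s = 1 := by
      rw [← Real.rpow_add ha0]; norm_num
    rw [e1, e2, show (1 - q) = -s by rw [hs]; ring, Real.rpow_neg ha1.le, one_div]
  have e3 : a ^ (-q) = a ^ (-s) / a := by
    rw [show -q = -s + (-1) by rw [hs]; ring, Real.rpow_add ha0, Real.rpow_neg_one]
    ring
  have e4 : a ^ (1 - q) = a ^ (-s) := by rw [show 1 - q = -s by rw [hs]; ring]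
  have e5 : a ^ (-s) * (1 + s / a) = a ^ (1 - q) + s * a ^ (-q) := by
    rw [e3, e4]; ring
  rw [e5, h4] at h3
  linarith

lemma tsum_nat_tail {q : ℝ} (hq2 : 2 ≤ q) (hq3 : q ≤ 3) {x : ℝ} (hx : 1 ≤ x) :
    ∑' n : ℕ, (if x < (n : ℝ) then ENNReal.ofReal ((n : ℝ) ^ (-q)) else 0)
      ≤ ENNReal.ofReal (4 * x ^ (1 - q)) := by
  have hx0 : (0:ℝ) < x := by linarith
  have hq1 : (0:ℝ) < q - 1 := by linarith
  set N : ℕ := Nat.floor x + 1 with hN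
  have hfl1 : 1 ≤ Nat.floor x := Nat.le_floor (by exact_mod_cast hx)
  have hN2 : 2 ≤ N := by omega
  have hcond : ∀ n : ℕ, (x < (n : ℝ)) ↔ N ≤ n := by
    intro n
    rw [hN, ← Nat.floor_lt hx0.le]
    omega
  set g : ℕ → ℝ := fun m => (m : ℝ) ^ (1 - q) with hg
  have hg_nonneg : ∀ m, 0 ≤ g m := fun m => Real.rpow_nonneg (Nat.cast_nonneg m) _
  have hg_anti : ∀ m k : ℕ, 1 ≤ m → m ≤ k → g k ≤ g m := by
    intro m k hm hmk
    apply Real.rpow_le_rpow_of_nonpos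
    · exact_mod_cast Nat.lt_of_lt_of_le Nat.zero_lt_one hm
    · exact_mod_cast hmk
    · linarith
  set u : ℕ → ℝ := fun n => if N ≤ n then (1 / (q - 1)) * (g (n - 1) - g n) else 0 with hu
  have hu_nonneg : ∀ n, 0 ≤ u n := by
    intro n
    rw [hu]
    dsimp only
    split
    · next h =>
      have : g n ≤ g (n - 1) := by
        apply hg_anti _ _ (by omega) (by omega)
      have h1q : (0:ℝ) ≤ 1 / (q - 1) := by positivity
      nlinarith
    · exact le_refl 0
  have hterm : ∀ n : ℕ, (if x < (n : ℝ) then ENNReal.ofReal ((n : ℝ) ^ (-q)) else 0)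
      ≤ ENNReal.ofReal (u n) := by
    intro n
    rw [hu]
    dsimp only
    by_cases h : x < (n : ℝ)
    · rw [if_pos h, if_pos ((hcond n).1 h)]
      apply ENNReal.ofReal_le_ofReal
      have hn2 : 2 ≤ n := le_trans hN2 ((hcond n).1 h)
      have ha : (2:ℝ) ≤ (n:ℝ) := by exact_mod_cast hn2
      have hstep := rpow_step hq2 ha
      have hcast : ((n - 1 : ℕ) : ℝ) = (n : ℝ) - 1 := by
        have : (1:ℕ) ≤ n := by omega
        push_cast [this]
        ring
      have hgg : g (n - 1) - g n = ((n:ℝ) - 1) ^ (1 - q) - (n:ℝ) ^ (1 - q) := by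
        rw [hg]; dsimp only; rw [hcast]
      rw [hgg]
      calc (n:ℝ) ^ (-q) = (1 / (q - 1)) * ((q - 1) * (n:ℝ) ^ (-q)) := by field_simp
        _ ≤ (1 / (q - 1)) * (((n:ℝ) - 1) ^ (1 - q) - (n:ℝ) ^ (1 - q)) :=
            mul_le_mul_of_nonneg_left hstep (by positivity)
    · rw [if_neg h]
      exact zero_le
  have hclaim : ∀ K : ℕ, ∑ n ∈ Finset.range K, u n
      = if N ≤ K then (1 / (q - 1)) * (g (N - 1) - g (K - 1)) else 0 := by
    intro K
    induction K with
    | zero => simp [if_neg (by omega : ¬ N ≤ 0)]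
    | succ K ih =>
      rw [Finset.sum_range_succ, ih, hu]
      dsimp only
      by_cases h1 : N ≤ K
      · rw [if_pos h1, if_pos (by omega : N ≤ K + 1), if_pos h1]
        have : K + 1 - 1 = K := by omega
        rw [this]
        ring
      · by_cases h2 : N ≤ K + 1
        · have hNK : K = N - 1 := by omega
          rw [if_neg h1, if_neg h1, if_pos h2]
          have : K + 1 - 1 = K := by omega
          rw [this, hNK]
          ring
        · rw [if_neg h1, if_neg h1, if_neg h2]
          ring
  have hpartial : ∀ K : ℕ, ∑ n ∈ Finset.range K, u n ≤ (1 / (q - 1)) * g (N - 1) := by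
    intro K
    rw [hclaim K]
    split
    · have := hg_nonneg (K - 1)
      have h1q : (0:ℝ) ≤ 1 / (q - 1) := by positivity
      nlinarith [hg_nonneg (N - 1)]
    · positivity
  have hfinal : (1 / (q - 1)) * g (N - 1) ≤ 4 * x ^ (1 - q) := by
    have hN1 : N - 1 = Nat.floor x := by omega
    have hflhalf : x / 2 ≤ (Nat.floor x : ℝ) := by
      rcases le_or_gt x 2 with h | h
      · have : (1:ℝ) ≤ (Nat.floor x : ℝ) := by exact_mod_cast hfl1
        linarith
      · have := Nat.sub_one_lt_floor x
        linarith
    have hg1 : g (N - 1) ≤ (x / 2) ^ (1 - q) := by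
      rw [hN1, hg]
      exact Real.rpow_le_rpow_of_nonpos (by linarith) hflhalf (by linarith)
    have hg2 : (x / 2) ^ (1 - q) = x ^ (1 - q) * 2 ^ (q - 1) := by
      rw [Real.div_rpow hx0.le (by norm_num : (0:ℝ) ≤ 2), div_eq_mul_inv,
        ← Real.rpow_neg (by norm_num : (0:ℝ) ≤ 2)]
      norm_num
    have hg3 : (2:ℝ) ^ (q - 1) ≤ 4 := by
      calc (2:ℝ) ^ (q - 1) ≤ 2 ^ (2:ℝ) :=
        Real.rpow_le_rpow_of_exponent_le (by norm_num) (by linarith)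
        _ = 4 := by
          rw [show (2:ℝ) = ((2:ℕ):ℝ) by norm_num, Real.rpow_natCast]
          norm_num
    have h1q : 1 / (q - 1) ≤ 1 := by
      rw [div_le_one hq1]; linarith
    have hxp : (0:ℝ) ≤ x ^ (1 - q) := Real.rpow_nonneg hx0.le _
    calc (1 / (q - 1)) * g (N - 1) ≤ 1 * ((x / 2) ^ (1 - q)) := by
          apply mul_le_mul h1q hg1 (hg_nonneg _) (by norm_num)
      _ = x ^ (1 - q) * 2 ^ (q - 1) := by rw [one_mul, hg2]
      _ ≤ x ^ (1 - q) * 4 := by nlinarith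
      _ = 4 * x ^ (1 - q) := by ring
  calc ∑' n : ℕ, (if x < (n : ℝ) then ENNReal.ofReal ((n : ℝ) ^ (-q)) else 0)
      ≤ ∑' n : ℕ, ENNReal.ofReal (u n) := ENNReal.tsum_le_tsum hterm
    _ = ⨆ K : ℕ, ∑ n ∈ Finset.range K, ENNReal.ofReal (u n) := ENNReal.tsum_eq_iSup_nat
    _ ≤ ENNReal.ofReal (4 * x ^ (1 - q)) := by
        apply iSup_le
        intro K
        rw [← ENNReal.ofReal_sum_of_nonneg (fun n _ => hu_nonneg n)]
        exact ENNReal.ofReal_le_ofReal ((hpartial K).trans hfinal)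

lemma harmonic_sum_le : ∀ K : ℕ, ∑ n ∈ Finset.range K, ((n : ℝ) + 1)⁻¹ ≤ 1 + Real.log K := by
  intro K
  induction K with
  | zero => simp
  | succ K ih =>
    rcases Nat.eq_zero_or_pos K with h | h
    · subst h; simp
    · have hK1 : (1:ℝ) ≤ (K:ℝ) := by exact_mod_cast h
      have hlog : ((K:ℝ) + 1)⁻¹ ≤ Real.log ((K:ℝ) + 1) - Real.log K := by
        have hpos : (0:ℝ) < (K:ℝ) / ((K:ℝ) + 1) := by positivity
        have h1 := Real.log_le_sub_one_of_pos hpos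
        rw [Real.log_div (by linarith) (by linarith)] at h1
        have : (K:ℝ) / ((K:ℝ) + 1) - 1 = -(((K:ℝ) + 1)⁻¹) := by field_simp; ring
        linarith [this ▸ h1]
      rw [Finset.sum_range_succ]
      push_cast
      linarith

lemma lattice_tail {γ : ℝ} (hγ1 : 7/4 < γ) (hγ2 : γ ≤ 2) {Λ : ℝ} (hΛ : 2 ≤ Λ) :
    ∑' r : ℤ × ℤ, (if Λ ^ 2 < 1 + nsq r then ENNReal.ofReal ((1 + nsq r) ^ (-γ)) else 0)
      ≤ ENNReal.ofReal (192 * Λ ^ (2 - 2 * γ)) := by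
  have hΛ0 : (0:ℝ) < Λ := by linarith
  set G : ℕ → ℝ≥0∞ := fun n =>
    if Λ / 2 < (n : ℝ) then ENNReal.ofReal ((1 + (n : ℝ) ^ 2) ^ (-γ)) else 0 with hG
  have hHG : ∀ r : ℤ × ℤ,
      (if Λ ^ 2 < 1 + nsq r then ENNReal.ofReal ((1 + nsq r) ^ (-γ)) else 0) ≤ G (mA r) := by
    intro r
    by_cases h : Λ ^ 2 < 1 + nsq r
    · rw [if_pos h, hG]
      dsimp only
      have hm2 : Λ ^ 2 < 1 + 2 * ((mA r : ℝ)) ^ 2 := lt_of_lt_of_le h (by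
        have := nsq_le_two_sq_mA r; linarith)
      have hcond : Λ / 2 < (mA r : ℝ) := by
        have hΛ4 : (4:ℝ) ≤ Λ ^ 2 := by nlinarith
        have : (Λ / 2) ^ 2 < ((mA r : ℝ)) ^ 2 := by nlinarith
        exact lt_of_pow_lt_pow_left₀ 2 (Nat.cast_nonneg _) this
      rw [if_pos hcond]
      apply ENNReal.ofReal_le_ofReal
      apply Real.rpow_le_rpow_of_nonpos
      · positivity
      · have := sq_mA_le_nsq r; linarith
      · linarith
    · rw [if_neg h]; exact zero_le
  set q : ℝ := 2 * γ - 1 with hq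
  have hq2 : 2 ≤ q := by rw [hq]; linarith
  have hq3 : q ≤ 3 := by rw [hq]; linarith
  have hx : 1 ≤ Λ / 2 := by linarith
  have hGn : ∀ n : ℕ, ((8 * n + 4 : ℕ) : ℝ≥0∞) * G n
      ≤ ENNReal.ofReal 12 * (if Λ / 2 < (n:ℝ) then ENNReal.ofReal ((n : ℝ) ^ (-q)) else 0) := by
    intro n
    rw [hG]
    dsimp only
    by_cases h : Λ / 2 < (n : ℝ)
    · rw [if_pos h, if_pos h]
      have hn1 : (1:ℝ) ≤ (n:ℝ) := by linarith
      have hn0 : (0:ℝ) < (n:ℝ) := by linarith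
      rw [show ((8 * n + 4 : ℕ) : ℝ≥0∞) = ENNReal.ofReal ((8 * n + 4 : ℕ) : ℝ) by
        rw [ENNReal.ofReal_natCast]]
      rw [← ENNReal.ofReal_mul (by positivity), ← ENNReal.ofReal_mul (by norm_num)]
      apply ENNReal.ofReal_le_ofReal
      have h1 : (1 + (n:ℝ) ^ 2) ^ (-γ) ≤ ((n:ℝ) ^ 2) ^ (-γ) := by
        apply Real.rpow_le_rpow_of_nonpos (by positivity) (by linarith) (by linarith)
      have h2 : ((n:ℝ) ^ 2) ^ (-γ) = (n:ℝ) ^ (-(2 * γ)) := by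
        rw [← Real.rpow_natCast (n:ℝ) 2, ← Real.rpow_mul hn0.le]
        norm_num
      have h3 : ((8 * n + 4 : ℕ) : ℝ) ≤ 12 * (n:ℝ) := by
        push_cast
        linarith
      have h4 : (n:ℝ) * (n:ℝ) ^ (-(2 * γ)) = (n:ℝ) ^ (-q) := by
        rw [hq, show -(2 * γ - 1) = 1 + -(2 * γ) by ring, Real.rpow_add hn0, Real.rpow_one]
      calc ((8 * n + 4 : ℕ) : ℝ) * (1 + (n:ℝ) ^ 2) ^ (-γ)
          ≤ (12 * (n:ℝ)) * ((n:ℝ) ^ 2) ^ (-γ) := by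
            apply mul_le_mul h3 h1 (Real.rpow_nonneg (by positivity) _) (by positivity)
        _ = 12 * ((n:ℝ) * (n:ℝ) ^ (-(2*γ))) := by rw [h2]; ring
        _ = 12 * ((n:ℝ) ^ (-q)) := by rw [h4]
    · rw [if_neg h, if_neg h, mul_zero, mul_zero]
  calc ∑' r : ℤ × ℤ, (if Λ ^ 2 < 1 + nsq r then ENNReal.ofReal ((1 + nsq r) ^ (-γ)) else 0)
      ≤ ∑' n, ((8 * n + 4 : ℕ) : ℝ≥0∞) * G n := tsum_le_shell_sum _ _ hHG
    _ ≤ ∑' n : ℕ, ENNReal.ofReal 12 *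
          (if Λ / 2 < (n:ℝ) then ENNReal.ofReal ((n : ℝ) ^ (-q)) else 0) :=
        ENNReal.tsum_le_tsum hGn
    _ = ENNReal.ofReal 12 * ∑' n : ℕ,
          (if Λ / 2 < (n:ℝ) then ENNReal.ofReal ((n : ℝ) ^ (-q)) else 0) :=
        ENNReal.tsum_mul_left
    _ ≤ ENNReal.ofReal 12 * ENNReal.ofReal (4 * (Λ / 2) ^ (1 - q)) := by
        gcongr
        exact tsum_nat_tail hq2 hq3 hx
    _ ≤ ENNReal.ofReal (192 * Λ ^ (2 - 2 * γ)) := by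
        rw [← ENNReal.ofReal_mul (by norm_num)]
        apply ENNReal.ofReal_le_ofReal
        have h5 : (Λ / 2) ^ (1 - q) = Λ ^ (1 - q) * 2 ^ (q - 1) := by
          rw [Real.div_rpow hΛ0.le (by norm_num : (0:ℝ) ≤ 2), div_eq_mul_inv,
            ← Real.rpow_neg (by norm_num : (0:ℝ) ≤ 2)]
          norm_num
        have h6 : (2:ℝ) ^ (q - 1) ≤ 4 := by
          calc (2:ℝ) ^ (q - 1) ≤ 2 ^ (2:ℝ) :=
            Real.rpow_le_rpow_of_exponent_le (by norm_num) (by linarith)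
            _ = 4 := by
              rw [show (2:ℝ) = ((2:ℕ):ℝ) by norm_num, Real.rpow_natCast]
              norm_num
        have h7 : 1 - q = 2 - 2 * γ := by rw [hq]; ring
        have h8 : (0:ℝ) ≤ Λ ^ (1 - q) := Real.rpow_nonneg hΛ0.le _
        rw [h5, h7] at *
        nlinarith [Real.rpow_nonneg hΛ0.le (2 - 2*γ)]

lemma lattice_ball {α : ℝ} (hα1 : 3/4 < α) (hα2 : α ≤ 1) {Λ : ℝ} (hΛ : 2 ≤ Λ) :
    ∑' s : ℤ × ℤ, (if 1 + nsq s ≤ Λ ^ 2 then ENNReal.ofReal ((1 + nsq s) ^ (-α)) else 0)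
      ≤ ENNReal.ofReal (96 * Λ ^ (2 - 2 * α) * (1 + Real.log Λ)) := by
  have hΛ0 : (0:ℝ) < Λ := by linarith
  set G : ℕ → ℝ≥0∞ := fun n =>
    if (n : ℝ) ≤ Λ then ENNReal.ofReal ((1 + (n : ℝ) ^ 2) ^ (-α)) else 0 with hG
  have hHG : ∀ s : ℤ × ℤ,
      (if 1 + nsq s ≤ Λ ^ 2 then ENNReal.ofReal ((1 + nsq s) ^ (-α)) else 0) ≤ G (mA s) := by
    intro s
    by_cases h : 1 + nsq s ≤ Λ ^ 2
    · rw [if_pos h, hG]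
      dsimp only
      have hm : ((mA s : ℝ)) ^ 2 < Λ ^ 2 := by
        have := sq_mA_le_nsq s; linarith
      have hcond : (mA s : ℝ) ≤ Λ :=
        (lt_of_pow_lt_pow_left₀ 2 hΛ0.le hm).le
      rw [if_pos hcond]
      apply ENNReal.ofReal_le_ofReal
      apply Real.rpow_le_rpow_of_nonpos
      · positivity
      · have := sq_mA_le_nsq s; linarith
      · linarith
    · rw [if_neg h]; exact zero_le
  set c : ℝ := 48 * Λ ^ (2 - 2 * α) with hc
  have hc0 : 0 ≤ c := by rw [hc]; positivity
  have hGn : ∀ n : ℕ, ((8 * n + 4 : ℕ) : ℝ≥0∞) * G n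
      ≤ if (n:ℝ) ≤ Λ then ENNReal.ofReal (c * ((n:ℝ) + 1)⁻¹) else 0 := by
    intro n
    rw [hG]
    dsimp only
    by_cases h : (n : ℝ) ≤ Λ
    · rw [if_pos h, if_pos h]
      have hn0 : (0:ℝ) < (n:ℝ) + 1 := by positivity
      rw [show ((8 * n + 4 : ℕ) : ℝ≥0∞) = ENNReal.ofReal ((8 * n + 4 : ℕ) : ℝ) by
        rw [ENNReal.ofReal_natCast]]
      rw [← ENNReal.ofReal_mul (by positivity)]
      apply ENNReal.ofReal_le_ofReal
      have h1 : (1 + (n:ℝ) ^ 2) ^ (-α) ≤ 2 * ((n:ℝ) + 1) ^ (-(2 * α)) := by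
        have e0 : (((n:ℝ) + 1) ^ 2 / 2) ≤ 1 + (n:ℝ) ^ 2 := by nlinarith [sq_nonneg ((n:ℝ) - 1)]
        have e1 : (1 + (n:ℝ) ^ 2) ^ (-α) ≤ (((n:ℝ) + 1) ^ 2 / 2) ^ (-α) :=
          Real.rpow_le_rpow_of_nonpos (by positivity) e0 (by linarith)
        have e2 : (((n:ℝ) + 1) ^ 2 / 2) ^ (-α) = (((n:ℝ) + 1) ^ 2) ^ (-α) * 2 ^ α := by
          rw [Real.div_rpow (by positivity) (by norm_num : (0:ℝ) ≤ 2), div_eq_mul_inv,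
            ← Real.rpow_neg (by norm_num : (0:ℝ) ≤ 2)]
          norm_num
        have e3 : (((n:ℝ) + 1) ^ 2) ^ (-α) = ((n:ℝ) + 1) ^ (-(2 * α)) := by
          rw [← Real.rpow_natCast ((n:ℝ) + 1) 2, ← Real.rpow_mul hn0.le]
          norm_num
        have e4 : (2:ℝ) ^ α ≤ 2 := by
          calc (2:ℝ) ^ α ≤ 2 ^ (1:ℝ) :=
            Real.rpow_le_rpow_of_exponent_le (by norm_num) hα2
            _ = 2 := Real.rpow_one 2
        have e5 : (0:ℝ) ≤ (((n:ℝ) + 1) ^ 2) ^ (-α) := Real.rpow_nonneg (by positivity) _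
        calc (1 + (n:ℝ) ^ 2) ^ (-α) ≤ (((n:ℝ) + 1) ^ 2) ^ (-α) * 2 ^ α := by rw [← e2]; exact e1
          _ ≤ (((n:ℝ) + 1) ^ 2) ^ (-α) * 2 := by nlinarith
          _ = 2 * ((n:ℝ) + 1) ^ (-(2 * α)) := by rw [e3]; ring
      have h3 : ((8 * n + 4 : ℕ) : ℝ) ≤ 12 * ((n:ℝ) + 1) := by push_cast; linarith
      have h4 : ((n:ℝ) + 1) * ((n:ℝ) + 1) ^ (-(2 * α)) = ((n:ℝ) + 1) ^ (1 - 2 * α) := by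
        rw [show (1 - 2 * α) = 1 + -(2 * α) by ring, Real.rpow_add hn0, Real.rpow_one]
      have h5 : ((n:ℝ) + 1) ^ (1 - 2 * α)
          = ((n:ℝ) + 1) ^ (2 - 2 * α) * ((n:ℝ) + 1)⁻¹ := by
        rw [show (1 - 2*α) = (2 - 2*α) + (-1) by ring, Real.rpow_add hn0, Real.rpow_neg_one]
      have h6 : ((n:ℝ) + 1) ^ (2 - 2 * α) ≤ 2 * Λ ^ (2 - 2 * α) := by
        calc ((n:ℝ) + 1) ^ (2 - 2 * α) ≤ (2 * Λ) ^ (2 - 2 * α) :=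
            Real.rpow_le_rpow (by positivity) (by linarith) (by linarith)
          _ = 2 ^ (2 - 2*α) * Λ ^ (2 - 2*α) := Real.mul_rpow (by norm_num) hΛ0.le
          _ ≤ 2 * Λ ^ (2 - 2*α) := by
              have : (2:ℝ) ^ (2 - 2*α) ≤ 2 ^ (1:ℝ) :=
                Real.rpow_le_rpow_of_exponent_le (by norm_num) (by linarith)
              rw [Real.rpow_one] at this
              nlinarith [Real.rpow_nonneg hΛ0.le (2 - 2*α)]
      calc ((8 * n + 4 : ℕ) : ℝ) * (1 + (n:ℝ) ^ 2) ^ (-α)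
          ≤ (12 * ((n:ℝ) + 1)) * (2 * ((n:ℝ) + 1) ^ (-(2 * α))) := by
            apply mul_le_mul h3 h1 (Real.rpow_nonneg (by positivity) _) (by positivity)
        _ = 24 * (((n:ℝ) + 1) * ((n:ℝ) + 1) ^ (-(2 * α))) := by ring
        _ = 24 * (((n:ℝ) + 1) ^ (2 - 2 * α) * ((n:ℝ) + 1)⁻¹) := by rw [h4, h5]
        _ ≤ 24 * ((2 * Λ ^ (2 - 2 * α)) * ((n:ℝ) + 1)⁻¹) := by
            have hinv : (0:ℝ) ≤ ((n:ℝ) + 1)⁻¹ := by positivity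
            nlinarith [h6]
        _ = c * ((n:ℝ) + 1)⁻¹ := by rw [hc]; ring
    · rw [if_neg h, if_neg h, mul_zero]
  set M : ℕ := Nat.floor Λ with hM
  have hsum : ∀ K : ℕ, ∑ n ∈ Finset.range K,
      (if (n:ℝ) ≤ Λ then c * ((n:ℝ) + 1)⁻¹ else 0) ≤ c * (1 + Real.log (M + 1)) := by
    intro K
    have hfilter : ∑ n ∈ Finset.range K, (if (n:ℝ) ≤ Λ then c * ((n:ℝ) + 1)⁻¹ else 0)
        = ∑ n ∈ (Finset.range K).filter (fun n : ℕ => (n:ℝ) ≤ Λ), c * ((n:ℝ) + 1)⁻¹ :=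
      (Finset.sum_filter _ _).symm
    rw [hfilter]
    have hsubset : (Finset.range K).filter (fun n : ℕ => (n:ℝ) ≤ Λ) ⊆ Finset.range (M + 1) := by
      intro n hn
      rw [Finset.mem_filter] at hn
      rw [Finset.mem_range]
      have : n ≤ M := Nat.le_floor hn.2
      omega
    calc ∑ n ∈ (Finset.range K).filter (fun n : ℕ => (n:ℝ) ≤ Λ), c * ((n:ℝ) + 1)⁻¹
        ≤ ∑ n ∈ Finset.range (M + 1), c * ((n:ℝ) + 1)⁻¹ :=
          Finset.sum_le_sum_of_subset_of_nonneg hsubset (fun n _ _ => by positivity)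
      _ = c * ∑ n ∈ Finset.range (M + 1), ((n:ℝ) + 1)⁻¹ := by rw [Finset.mul_sum]
      _ ≤ c * (1 + Real.log (M + 1)) := by
          have := harmonic_sum_le (M + 1)
          have hcast : ((M + 1 : ℕ) : ℝ) = (M : ℝ) + 1 := by push_cast; ring
          rw [hcast] at this
          nlinarith
  have hlog : c * (1 + Real.log (M + 1)) ≤ 96 * Λ ^ (2 - 2 * α) * (1 + Real.log Λ) := by
    have hM1 : ((M:ℝ) + 1) ≤ 2 * Λ := by
      have := Nat.floor_le hΛ0.le
      rw [← hM] at this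
      linarith
    have hlog1 : Real.log ((M:ℝ) + 1) ≤ Real.log 2 + Real.log Λ := by
      rw [← Real.log_mul (by norm_num) (by linarith)]
      apply Real.log_le_log (by positivity) hM1
    have hlog2 : Real.log 2 ≤ 1 := by
      have := Real.log_le_sub_one_of_pos (by norm_num : (0:ℝ) < 2)
      linarith
    have hlog3 : 0 ≤ Real.log Λ := Real.log_nonneg (by linarith)
    have : 1 + Real.log ((M:ℝ) + 1) ≤ 2 * (1 + Real.log Λ) := by linarith
    rw [hc]
    nlinarith [Real.rpow_nonneg hΛ0.le (2 - 2*α), hlog3,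
      Real.log_nonneg (show (1:ℝ) ≤ (M:ℝ) + 1 by
        have := Nat.cast_nonneg (α := ℝ) M; linarith)]
  calc ∑' s : ℤ × ℤ, (if 1 + nsq s ≤ Λ ^ 2 then ENNReal.ofReal ((1 + nsq s) ^ (-α)) else 0)
      ≤ ∑' n, ((8 * n + 4 : ℕ) : ℝ≥0∞) * G n := tsum_le_shell_sum _ _ hHG
    _ ≤ ∑' n : ℕ, (if (n:ℝ) ≤ Λ then ENNReal.ofReal (c * ((n:ℝ) + 1)⁻¹) else 0) :=
        ENNReal.tsum_le_tsum hGn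
    _ = ⨆ K : ℕ, ∑ n ∈ Finset.range K,
          (if (n:ℝ) ≤ Λ then ENNReal.ofReal (c * ((n:ℝ) + 1)⁻¹) else 0) :=
        ENNReal.tsum_eq_iSup_nat
    _ ≤ ENNReal.ofReal (96 * Λ ^ (2 - 2 * α) * (1 + Real.log Λ)) := by
        apply iSup_le
        intro K
        have heq : ∀ n : ℕ, (if (n:ℝ) ≤ Λ then ENNReal.ofReal (c * ((n:ℝ) + 1)⁻¹) else 0)
            = ENNReal.ofReal (if (n:ℝ) ≤ Λ then c * ((n:ℝ) + 1)⁻¹ else 0) := by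
          intro n
          split <;> simp
        simp_rw [heq]
        rw [← ENNReal.ofReal_sum_of_nonneg (fun n _ => by positivity)]
        exact ENNReal.ofReal_le_ofReal ((hsum K).trans hlog)

lemma nsq_decomp_le (a b : ℤ × ℤ) : nsq (a + b) ≤ 2 * nsq a + 2 * nsq b := by
  unfold nsq
  simp only [Prod.fst_add, Prod.snd_add]
  push_cast
  nlinarith [sq_nonneg ((a.1:ℝ) - (b.1:ℝ)), sq_nonneg ((a.2:ℝ) - (b.2:ℝ))]

/-- Mixed low/high tail sum: for `3/2 < β ≤ 2`, `Λ ≥ 2` and `p` with `1+|p|² ≤ Λ²`,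
`∑_{h(r) > Λ²} (1+|r-p|²)^{-β/2} (1+|r|²)^{-1} ≤ C (1+log Λ) Λ^{-β}`. -/
theorem bessel_mixed_tail_sum (β : ℝ) (hβ1 : 3 / 2 < β) (hβ2 : β ≤ 2) :
    ∃ C : ℝ, 0 < C ∧ ∀ Λ : ℝ, 2 ≤ Λ → ∀ p : ℤ × ℤ, 1 + nsq p ≤ Λ ^ 2 →
      ∑' r : {r : ℤ × ℤ // Λ ^ 2 < 1 + nsq r},
        ENNReal.ofReal ((1 + nsq (r.1 - p)) ^ (-(β / 2)) * (1 + nsq r.1)⁻¹) ≤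
      ENNReal.ofReal (C * (1 + Real.log Λ) * Λ ^ (-β)) := by
  refine ⟨1000, by norm_num, ?_⟩
  intro Λ hΛ p hp
  have hΛ0 : (0:ℝ) < Λ := by linarith
  have hΛ20 : (0:ℝ) < Λ ^ 2 := by positivity
  set γ : ℝ := β / 2 + 1 with hγ
  set HA : ℤ × ℤ → ℝ≥0∞ := fun r =>
    if Λ ^ 2 < 1 + nsq r then ENNReal.ofReal (4 * (1 + nsq r) ^ (-γ)) else 0 with hHA
  set GB : ℤ × ℤ → ℝ≥0∞ := fun s =>
    if 1 + nsq s ≤ Λ ^ 2 then ENNReal.ofReal ((Λ ^ 2)⁻¹ * (1 + nsq s) ^ (-(β / 2))) else 0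
    with hGB
  have hpt : ∀ r : {r : ℤ × ℤ // Λ ^ 2 < 1 + nsq r},
      ENNReal.ofReal ((1 + nsq (r.1 - p)) ^ (-(β / 2)) * (1 + nsq r.1)⁻¹)
        ≤ HA r.1 + GB (r.1 - p) := by
    intro r
    have hrS : Λ ^ 2 < 1 + nsq r.1 := r.2
    have hX : (0:ℝ) < 1 + nsq r.1 := one_add_nsq_pos _
    have hY : (0:ℝ) < 1 + nsq (r.1 - p) := one_add_nsq_pos _
    by_cases hc : 1 + nsq r.1 ≤ 4 * (1 + nsq (r.1 - p))
    · -- region A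
      have h1 : (1 + nsq (r.1 - p)) ^ (-(β / 2)) ≤ ((1 + nsq r.1) / 4) ^ (-(β / 2)) :=
        Real.rpow_le_rpow_of_nonpos (by positivity) (by linarith) (by linarith)
      have h2 : ((1 + nsq r.1) / 4) ^ (-(β / 2))
          = (1 + nsq r.1) ^ (-(β / 2)) * 4 ^ (β / 2) := by
        rw [Real.div_rpow hX.le (by norm_num : (0:ℝ) ≤ 4), div_eq_mul_inv,
          ← Real.rpow_neg (by norm_num : (0:ℝ) ≤ 4)]
        norm_num
      have h3 : (4:ℝ) ^ (β / 2) ≤ 4 := by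
        calc (4:ℝ) ^ (β / 2) ≤ 4 ^ (1:ℝ) :=
          Real.rpow_le_rpow_of_exponent_le (by norm_num) (by linarith)
          _ = 4 := Real.rpow_one 4
      have h4 : (1 + nsq (r.1 - p)) ^ (-(β / 2)) ≤ 4 * (1 + nsq r.1) ^ (-(β / 2)) := by
        have h0 : (0:ℝ) ≤ (1 + nsq r.1) ^ (-(β / 2)) := Real.rpow_nonneg hX.le _
        calc (1 + nsq (r.1 - p)) ^ (-(β / 2)) ≤ (1 + nsq r.1) ^ (-(β / 2)) * 4 ^ (β / 2) :=
            h2 ▸ h1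
          _ ≤ 4 * (1 + nsq r.1) ^ (-(β / 2)) := by nlinarith
      have h5 : (1 + nsq r.1) ^ (-(β / 2)) * (1 + nsq r.1)⁻¹ = (1 + nsq r.1) ^ (-γ) := by
        rw [← Real.rpow_neg_one (1 + nsq r.1), ← Real.rpow_add hX, hγ]
        ring_nf
      have hbound : (1 + nsq (r.1 - p)) ^ (-(β / 2)) * (1 + nsq r.1)⁻¹
          ≤ 4 * (1 + nsq r.1) ^ (-γ) := by
        calc (1 + nsq (r.1 - p)) ^ (-(β / 2)) * (1 + nsq r.1)⁻¹
            ≤ (4 * (1 + nsq r.1) ^ (-(β / 2))) * (1 + nsq r.1)⁻¹ :=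
              mul_le_mul_of_nonneg_right h4 (by positivity)
          _ = 4 * ((1 + nsq r.1) ^ (-(β / 2)) * (1 + nsq r.1)⁻¹) := by ring
          _ = 4 * (1 + nsq r.1) ^ (-γ) := by rw [h5]
      calc ENNReal.ofReal ((1 + nsq (r.1 - p)) ^ (-(β / 2)) * (1 + nsq r.1)⁻¹)
          ≤ HA r.1 := by
            rw [hHA]
            dsimp only
            rw [if_pos hrS]
            exact ENNReal.ofReal_le_ofReal hbound
        _ ≤ HA r.1 + GB (r.1 - p) := le_self_add
    · -- region B
      push_neg at hc
      have hdecomp : nsq r.1 ≤ 2 * nsq (r.1 - p) + 2 * nsq p := by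
        have : r.1 = (r.1 - p) + p := by ring
        calc nsq r.1 = nsq ((r.1 - p) + p) := by rw [← this]
          _ ≤ 2 * nsq (r.1 - p) + 2 * nsq p := nsq_decomp_le _ _
      have hscond : 1 + nsq (r.1 - p) ≤ Λ ^ 2 := by linarith
      have hinv : (1 + nsq r.1)⁻¹ ≤ (Λ ^ 2)⁻¹ := by
        apply inv_anti₀ hΛ20 hrS.le
      have hbound : (1 + nsq (r.1 - p)) ^ (-(β / 2)) * (1 + nsq r.1)⁻¹
          ≤ (Λ ^ 2)⁻¹ * (1 + nsq (r.1 - p)) ^ (-(β / 2)) := by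
        have h0 : (0:ℝ) ≤ (1 + nsq (r.1 - p)) ^ (-(β / 2)) := Real.rpow_nonneg hY.le _
        calc (1 + nsq (r.1 - p)) ^ (-(β / 2)) * (1 + nsq r.1)⁻¹
            ≤ (1 + nsq (r.1 - p)) ^ (-(β / 2)) * (Λ ^ 2)⁻¹ :=
              mul_le_mul_of_nonneg_left hinv h0
          _ = (Λ ^ 2)⁻¹ * (1 + nsq (r.1 - p)) ^ (-(β / 2)) := by ring
      calc ENNReal.ofReal ((1 + nsq (r.1 - p)) ^ (-(β / 2)) * (1 + nsq r.1)⁻¹)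
          ≤ GB (r.1 - p) := by
            rw [hGB]
            dsimp only
            rw [if_pos hscond]
            exact ENNReal.ofReal_le_ofReal hbound
        _ ≤ HA r.1 + GB (r.1 - p) := le_add_self
  have hsplit : ∑' r : {r : ℤ × ℤ // Λ ^ 2 < 1 + nsq r},
      ENNReal.ofReal ((1 + nsq (r.1 - p)) ^ (-(β / 2)) * (1 + nsq r.1)⁻¹)
      ≤ (∑' r : {r : ℤ × ℤ // Λ ^ 2 < 1 + nsq r}, HA r.1)
        + ∑' r : {r : ℤ × ℤ // Λ ^ 2 < 1 + nsq r}, GB (r.1 - p) := by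
    calc ∑' r : {r : ℤ × ℤ // Λ ^ 2 < 1 + nsq r},
        ENNReal.ofReal ((1 + nsq (r.1 - p)) ^ (-(β / 2)) * (1 + nsq r.1)⁻¹)
        ≤ ∑' r : {r : ℤ × ℤ // Λ ^ 2 < 1 + nsq r}, (HA r.1 + GB (r.1 - p)) :=
          ENNReal.tsum_le_tsum hpt
      _ = _ := ENNReal.tsum_add
  -- part A
  have hA : (∑' r : {r : ℤ × ℤ // Λ ^ 2 < 1 + nsq r}, HA r.1)
      ≤ ENNReal.ofReal (768 * Λ ^ (-β)) := by
    have hinj : Injective (fun r : {r : ℤ × ℤ // Λ ^ 2 < 1 + nsq r} => r.1) :=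
      Subtype.val_injective
    have step1 : (∑' r : {r : ℤ × ℤ // Λ ^ 2 < 1 + nsq r}, HA r.1) ≤ ∑' r : ℤ × ℤ, HA r :=
      ENNReal.tsum_comp_le_tsum_of_injective hinj HA
    have heq : ∀ r : ℤ × ℤ, HA r = ENNReal.ofReal 4 *
        (if Λ ^ 2 < 1 + nsq r then ENNReal.ofReal ((1 + nsq r) ^ (-γ)) else 0) := by
      intro r
      rw [hHA]
      dsimp only
      split
      · rw [← ENNReal.ofReal_mul (by norm_num)]
      · rw [mul_zero]
    have hγ1 : 7/4 < γ := by rw [hγ]; linarith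
    have hγ2 : γ ≤ 2 := by rw [hγ]; linarith
    have step2 : ∑' r : ℤ × ℤ, HA r ≤ ENNReal.ofReal 4 * ENNReal.ofReal (192 * Λ ^ (2 - 2 * γ)) := by
      simp_rw [heq]
      rw [ENNReal.tsum_mul_left]
      gcongr
      exact lattice_tail hγ1 hγ2 hΛ
    have hexp : 2 - 2 * γ = -β := by rw [hγ]; ring
    calc (∑' r : {r : ℤ × ℤ // Λ ^ 2 < 1 + nsq r}, HA r.1)
        ≤ ENNReal.ofReal 4 * ENNReal.ofReal (192 * Λ ^ (2 - 2 * γ)) := step1.trans step2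
      _ = ENNReal.ofReal (768 * Λ ^ (-β)) := by
          rw [← ENNReal.ofReal_mul (by norm_num), hexp,
            show (4:ℝ) * (192 * Λ ^ (-β)) = 768 * Λ ^ (-β) by ring]
  -- part B
  have hB : (∑' r : {r : ℤ × ℤ // Λ ^ 2 < 1 + nsq r}, GB (r.1 - p))
      ≤ ENNReal.ofReal ((Λ ^ 2)⁻¹ * (96 * Λ ^ (2 - 2 * (β / 2)) * (1 + Real.log Λ))) := by
    have hinj : Injective (fun r : {r : ℤ × ℤ // Λ ^ 2 < 1 + nsq r} => r.1 - p) := by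
      intro a b h
      apply Subtype.ext
      have h' : a.1 - p = b.1 - p := h
      exact sub_left_injective h'
    have step1 : (∑' r : {r : ℤ × ℤ // Λ ^ 2 < 1 + nsq r}, GB (r.1 - p))
        ≤ ∑' s : ℤ × ℤ, GB s := ENNReal.tsum_comp_le_tsum_of_injective hinj GB
    have heq : ∀ s : ℤ × ℤ, GB s = ENNReal.ofReal ((Λ ^ 2)⁻¹) *
        (if 1 + nsq s ≤ Λ ^ 2 then ENNReal.ofReal ((1 + nsq s) ^ (-(β / 2))) else 0) := by
      intro s
      rw [hGB]
      dsimp only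
      split
      · rw [← ENNReal.ofReal_mul (by positivity)]
      · rw [mul_zero]
    have hα1 : 3/4 < β / 2 := by linarith
    have hα2 : β / 2 ≤ 1 := by linarith
    have step2 : ∑' s : ℤ × ℤ, GB s ≤ ENNReal.ofReal ((Λ ^ 2)⁻¹) *
        ENNReal.ofReal (96 * Λ ^ (2 - 2 * (β / 2)) * (1 + Real.log Λ)) := by
      simp_rw [heq]
      rw [ENNReal.tsum_mul_left]
      gcongr
      exact lattice_ball hα1 hα2 hΛ
    calc (∑' r : {r : ℤ × ℤ // Λ ^ 2 < 1 + nsq r}, GB (r.1 - p))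
        ≤ ENNReal.ofReal ((Λ ^ 2)⁻¹) *
          ENNReal.ofReal (96 * Λ ^ (2 - 2 * (β / 2)) * (1 + Real.log Λ)) := step1.trans step2
      _ = ENNReal.ofReal ((Λ ^ 2)⁻¹ * (96 * Λ ^ (2 - 2 * (β / 2)) * (1 + Real.log Λ))) := by
          rw [← ENNReal.ofReal_mul (by positivity)]
  -- combine
  have hid : (Λ ^ 2)⁻¹ * Λ ^ (2 - 2 * (β / 2)) = Λ ^ (-β) := by
    have h1 : (2 : ℝ) - 2 * (β / 2) = 2 + (-β) := by ring
    rw [h1, Real.rpow_add hΛ0, show Λ ^ (2:ℝ) = Λ ^ (2:ℕ) by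
      rw [← Real.rpow_natCast Λ 2]; norm_num]
    field_simp
  have hlogΛ : 0 ≤ Real.log Λ := Real.log_nonneg (by linarith)
  have hrp : (0:ℝ) ≤ Λ ^ (-β) := Real.rpow_nonneg hΛ0.le _
  have hfinal : 768 * Λ ^ (-β) + (Λ ^ 2)⁻¹ * (96 * Λ ^ (2 - 2 * (β / 2)) * (1 + Real.log Λ))
      ≤ 1000 * (1 + Real.log Λ) * Λ ^ (-β) := by
    have h2 : (Λ ^ 2)⁻¹ * (96 * Λ ^ (2 - 2 * (β / 2)) * (1 + Real.log Λ))
        = 96 * ((Λ ^ 2)⁻¹ * Λ ^ (2 - 2 * (β / 2))) * (1 + Real.log Λ) := by ring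
    rw [h2, hid]
    nlinarith
  calc ∑' r : {r : ℤ × ℤ // Λ ^ 2 < 1 + nsq r},
      ENNReal.ofReal ((1 + nsq (r.1 - p)) ^ (-(β / 2)) * (1 + nsq r.1)⁻¹)
      ≤ (∑' r : {r : ℤ × ℤ // Λ ^ 2 < 1 + nsq r}, HA r.1)
        + ∑' r : {r : ℤ × ℤ // Λ ^ 2 < 1 + nsq r}, GB (r.1 - p) := hsplit
    _ ≤ ENNReal.ofReal (768 * Λ ^ (-β))
        + ENNReal.ofReal ((Λ ^ 2)⁻¹ * (96 * Λ ^ (2 - 2 * (β / 2)) * (1 + Real.log Λ))) :=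
        add_le_add hA hB
    _ = ENNReal.ofReal (768 * Λ ^ (-β)
        + (Λ ^ 2)⁻¹ * (96 * Λ ^ (2 - 2 * (β / 2)) * (1 + Real.log Λ))) := by
        rw [← ENNReal.ofReal_add (by positivity) (by positivity)]
    _ ≤ ENNReal.ofReal (1000 * (1 + Real.log Λ) * Λ ^ (-β)) :=
        ENNReal.ofReal_le_ofReal hfinal
end
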